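/- arXiv:1304.3740 — 7 statements merged into one kernel-verified Lean document; each statement's English description precedes it below -/
import Mathlib

section
/- Let R be a commutative noetherian ring and let M be a gauge over R which is of finite type. Then every component M^n is a finitely generated R-module, and M is concentrated in a finite interval, i.e., there exist integers a ≤ b such that v : M^r → M^{r−1} is an isomorphism for all r ≤ a and f : M^r → M^{r+1} is an isomorphism for all r ≥ b. -/
universe u v

/-- A gauge over a commutative ring `R` (for the prime `p`): a family of `R`-modules
`M r` indexed by `ℤ`, with maps `f : M r → M (r+1)` and `v : M (r+1) → M r`
satisfying `f ∘ v = p·id` and `v ∘ f = p·id`. -/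
structure GaugeData (R : Type u) [CommRing R] (p : ℕ) : Type (max u (v + 1)) where
  M : ℤ → Type v
  [acg : ∀ r, AddCommGroup (M r)]
  [mod : ∀ r, Module R (M r)]
  f : ∀ r : ℤ, M r →ₗ[R] M (r + 1)
  v : ∀ r : ℤ, M (r + 1) →ₗ[R] M r
  fv : ∀ (r : ℤ) (x : M (r + 1)), f r (v r x) = (p : R) • x
  vf : ∀ (r : ℤ) (x : M r), v r (f r x) = (p : R) • x

attribute [instance] GaugeData.acg GaugeData.mod

variable {R : Type u} [CommRing R] {p : ℕ}

/-- Transport along an equality of indices. -/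
def GaugeData.cast (G : GaugeData R p) {r s : ℤ} (h : r = s) : G.M r ≃ₗ[R] G.M s := by
  subst h; exact LinearEquiv.refl R (G.M r)

/-- Iterated `f` : `M r → M (r + a)`. -/
def GaugeData.fpow (G : GaugeData R p) : (a : ℕ) → (r : ℤ) → (G.M r →ₗ[R] G.M (r + a))
  | 0, r => (G.cast (by simp)).toLinearMap
  | a + 1, r =>
      (G.cast (show r + 1 + (a : ℕ) = r + ((a + 1 : ℕ) : ℤ) by push_cast; ring)).toLinearMap
        ∘ₗ (G.fpow a (r + 1)) ∘ₗ (G.f r)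

/-- Iterated `v` : `M r → M (r - b)`. -/
def GaugeData.vpow (G : GaugeData R p) : (b : ℕ) → (r : ℤ) → (G.M r →ₗ[R] G.M (r - b))
  | 0, r => (G.cast (by simp)).toLinearMap
  | b + 1, r =>
      (G.cast (show r - 1 - (b : ℕ) = r - ((b + 1 : ℕ) : ℤ) by push_cast; ring)).toLinearMap
        ∘ₗ (G.vpow b (r - 1)) ∘ₗ (G.v (r - 1))
        ∘ₗ (G.cast (show r = r - 1 + 1 by ring)).toLinearMap

/-- The subset of `M n` consisting of all `f^a (m i)` with `n = d i + a` and all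
`v^b (m i)` with `n = d i - b`. -/
def GaugeData.genSet (G : GaugeData R p) {s : ℕ} (d : Fin s → ℤ) (m : ∀ i, G.M (d i))
    (n : ℤ) : Set (G.M n) :=
  {y | ∃ (i : Fin s) (a : ℕ) (h : d i + a = n), y = G.cast h (G.fpow a (d i) (m i))} ∪
    {y | ∃ (i : Fin s) (b : ℕ) (h : d i - b = n), y = G.cast h (G.vpow b (d i) (m i))}

/-- The homogeneous elements `m i` (of degrees `d i`) generate the gauge `G`. -/
def GaugeData.Generates (G : GaugeData R p) {s : ℕ} (d : Fin s → ℤ)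
    (m : ∀ i, G.M (d i)) : Prop :=
  ∀ (n : ℤ) (x : G.M n), x ∈ Submodule.span R (G.genSet d m n)

/-- A gauge is of finite type if finitely many homogeneous elements generate it. -/
def GaugeData.IsFiniteType (G : GaugeData R p) : Prop :=
  ∃ (s : ℕ) (d : Fin s → ℤ) (m : ∀ i, G.M (d i)), G.Generates d m

/-- A gauge is concentrated in the interval `[a, b]` if `v : M r → M (r - 1)` is an
isomorphism for all `r ≤ a` and `f : M r → M (r + 1)` is an isomorphism for all `r ≥ b`. -/
def GaugeData.ConcentratedIn (G : GaugeData R p) (a b : ℤ) : Prop :=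
  (∀ r : ℤ, r + 1 ≤ a → Function.Bijective (G.v r)) ∧
    (∀ r : ℤ, b ≤ r → Function.Bijective (G.f r))

namespace GaugeData

variable (G : GaugeData R p)

lemma cast_cast {r s t : ℤ} (h1 : r = s) (h2 : s = t) (x : G.M r) :
    G.cast h2 (G.cast h1 x) = G.cast (h1.trans h2) x := by
  subst h1; subst h2; rfl

lemma cast_refl {r : ℤ} (h : r = r) (x : G.M r) : G.cast h x = x := rfl

lemma f_cast {r s : ℤ} (h : r = s) (h2 : r + 1 = s + 1) (x : G.M r) :
    G.f s (G.cast h x) = G.cast h2 (G.f r x) := by subst h; rfl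

lemma v_cast {r s : ℤ} (h : r = s) (h2 : r + 1 = s + 1) (x : G.M (r + 1)) :
    G.v s (G.cast h2 x) = G.cast h (G.v r x) := by subst h; rfl

lemma fpow_succ' (a : ℕ) (r : ℤ) (x : G.M r) :
    G.fpow (a + 1) r x
      = G.cast (show r + (a : ℤ) + 1 = r + ((a + 1 : ℕ) : ℤ) by push_cast; ring)
        (G.f (r + (a : ℤ)) (G.fpow a r x)) := by
  induction a generalizing r with
  | zero =>
      simp only [fpow, LinearMap.comp_apply, LinearEquiv.coe_coe]
      rw [G.f_cast (show r = r + ((0:ℕ):ℤ) by simp) (by push_cast; ring), cast_cast, cast_cast]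
  | succ a ih =>
      have e1 : G.fpow (a + 1 + 1) r x
          = G.cast (show r + 1 + ((a+1:ℕ):ℤ) = r + ((a+1+1:ℕ):ℤ) by push_cast; ring)
            (G.fpow (a + 1) (r + 1) (G.f r x)) := rfl
      have e2 : G.fpow (a + 1) r x
          = G.cast (show r + 1 + ((a:ℕ):ℤ) = r + ((a+1:ℕ):ℤ) by push_cast; ring)
            (G.fpow a (r + 1) (G.f r x)) := rfl
      rw [e1, e2, ih (r + 1) (G.f r x),
        G.f_cast (show r + 1 + ((a:ℕ):ℤ) = r + ((a+1:ℕ):ℤ) by push_cast; ring)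
          (by push_cast; ring),
        cast_cast, cast_cast]

lemma vpow_succ' (b : ℕ) (r : ℤ) (x : G.M r) :
    G.vpow (b + 1) r x
      = G.cast (show r - ((b:ℕ):ℤ) - 1 = r - ((b+1:ℕ):ℤ) by push_cast; omega)
        (G.v (r - ((b:ℕ):ℤ) - 1)
          (G.cast (show r - ((b:ℕ):ℤ) = r - ((b:ℕ):ℤ) - 1 + 1 by omega)
            (G.vpow b r x))) := by
  induction b generalizing r with
  | zero =>
      have e1 : G.vpow 1 r x
          = G.cast (show r - 1 - ((0:ℕ):ℤ) = r - ((0+1:ℕ):ℤ) by push_cast; omega)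
            (G.cast (show r - 1 = r - 1 - ((0:ℕ):ℤ) by push_cast; omega)
              (G.v (r - 1) (G.cast (show r = r - 1 + 1 by omega) x))) := rfl
      have e0 : G.vpow 0 r x = G.cast (show r = r - ((0:ℕ):ℤ) by push_cast; omega) x := rfl
      rw [e1, e0, cast_cast, cast_cast,
        ← G.cast_cast (show r = r - 1 + 1 by omega)
          (show r - 1 + 1 = r - ((0:ℕ):ℤ) - 1 + 1 by push_cast; omega) x,
        G.v_cast (show r - 1 = r - ((0:ℕ):ℤ) - 1 by push_cast; omega)
          (show r - 1 + 1 = r - ((0:ℕ):ℤ) - 1 + 1 by push_cast; omega),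
        cast_cast]
  | succ b ih =>
      have e1 : G.vpow (b + 1 + 1) r x
          = G.cast (show r - 1 - ((b+1:ℕ):ℤ) = r - ((b+1+1:ℕ):ℤ) by push_cast; omega)
            (G.vpow (b + 1) (r - 1) (G.v (r - 1) (G.cast (show r = r - 1 + 1 by omega) x)))
          := rfl
      have e2 : G.vpow (b + 1) r x
          = G.cast (show r - 1 - ((b:ℕ):ℤ) = r - ((b+1:ℕ):ℤ) by push_cast; omega)
            (G.vpow b (r - 1) (G.v (r - 1) (G.cast (show r = r - 1 + 1 by omega) x)))
          := rfl
      rw [e1, e2, ih (r - 1), cast_cast, cast_cast,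
        ← G.cast_cast
          (show r - 1 - ((b:ℕ):ℤ) = r - 1 - ((b:ℕ):ℤ) - 1 + 1 by omega)
          (show r - 1 - ((b:ℕ):ℤ) - 1 + 1 = r - ((b+1:ℕ):ℤ) - 1 + 1 by push_cast; omega)
          (G.vpow b (r - 1) (G.v (r - 1) (G.cast (show r = r - 1 + 1 by omega) x))),
        G.v_cast (show r - 1 - ((b:ℕ):ℤ) - 1 = r - ((b+1:ℕ):ℤ) - 1 by push_cast; omega)
          (show r - 1 - ((b:ℕ):ℤ) - 1 + 1 = r - ((b+1:ℕ):ℤ) - 1 + 1 by push_cast; omega),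
        cast_cast]

lemma cast_zero {r s : ℤ} (h : r = s) : G.cast h (0 : G.M r) = 0 := map_zero _

lemma fpow_succ_top (a : ℕ) (r t : ℤ) (ht : r + ((a:ℕ):ℤ) = t)
    (h1 : r + ((a+1:ℕ):ℤ) = t + 1) (x : G.M r) :
    G.cast h1 (G.fpow (a+1) r x) = G.f t (G.cast ht (G.fpow a r x)) := by
  subst ht
  rw [fpow_succ', cast_cast, cast_refl, cast_refl]

lemma vpow_succ_top (b : ℕ) (r t : ℤ) (ht : r - ((b:ℕ):ℤ) - 1 = t)
    (h1 : r - ((b+1:ℕ):ℤ) = t) (h2 : r - ((b:ℕ):ℤ) = t + 1) (x : G.M r) :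
    G.cast h1 (G.vpow (b+1) r x) = G.v t (G.cast h2 (G.vpow b r x)) := by
  subst ht
  rw [vpow_succ', cast_cast, cast_refl]

lemma fpow_zero_succ (a : ℕ) {r : ℤ} (x : G.M r) (hx : G.fpow a r x = 0) :
    G.fpow (a+1) r x = 0 := by
  rw [fpow_succ', hx, map_zero, cast_zero]

lemma vpow_zero_succ (b : ℕ) {r : ℤ} (x : G.M r) (hx : G.vpow b r x = 0) :
    G.vpow (b+1) r x = 0 := by
  rw [vpow_succ', hx, cast_zero, map_zero, cast_zero]

end GaugeData

namespace GaugeData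

variable (G : GaugeData R p)
variable {s : ℕ} {d : Fin s → ℤ} {m : ∀ i, G.M (d i)}

lemma genSet_finite (n : ℤ) : (G.genSet d m n).Finite := by
  have h1 : ({y | ∃ (i : Fin s) (a : ℕ) (h : d i + a = n),
      y = G.cast h (G.fpow a (d i) (m i))} : Set (G.M n)).Finite := by
    apply Set.Finite.subset (Set.finite_range (fun i : Fin s =>
      if h : d i ≤ n then
        G.cast (show d i + (((n - d i).toNat : ℕ) : ℤ) = n by omega)
          (G.fpow (n - d i).toNat (d i) (m i))
      else 0))
    rintro y ⟨i, a, h, rfl⟩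
    refine ⟨i, ?_⟩
    obtain rfl : a = (n - d i).toNat := by omega
    exact dif_pos (show d i ≤ n by omega)
  have h2 : ({y | ∃ (i : Fin s) (b : ℕ) (h : d i - b = n),
      y = G.cast h (G.vpow b (d i) (m i))} : Set (G.M n)).Finite := by
    apply Set.Finite.subset (Set.finite_range (fun i : Fin s =>
      if h : n ≤ d i then
        G.cast (show d i - (((d i - n).toNat : ℕ) : ℤ) = n by omega)
          (G.vpow (d i - n).toNat (d i) (m i))
      else 0))
    rintro y ⟨i, b, h, rfl⟩
    refine ⟨i, ?_⟩
    obtain rfl : b = (d i - n).toNat := by omega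
    exact dif_pos (show n ≤ d i by omega)
  exact Set.Finite.union h1 h2

lemma module_finite (hgen : G.Generates d m) (n : ℤ) : Module.Finite R (G.M n) := by
  rw [Module.finite_def]
  have hsp : Submodule.span R (G.genSet d m n) = ⊤ :=
    eq_top_iff.mpr (fun x _ => hgen n x)
  rw [← hsp]
  exact Submodule.fg_def.mpr ⟨_, G.genSet_finite n, rfl⟩

lemma f_surj (hgen : G.Generates d m) {D : ℤ} (hD : ∀ i, d i ≤ D) {r : ℤ} (hr : D ≤ r) :
    Function.Surjective (G.f r) := by
  have hrange : Submodule.span R (G.genSet d m (r+1)) ≤ LinearMap.range (G.f r) := by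
    rw [Submodule.span_le]
    rintro y (⟨i, a, h, rfl⟩ | ⟨i, b, h, rfl⟩)
    · obtain ⟨a', rfl⟩ : ∃ a', a = a' + 1 := ⟨a - 1, by have := hD i; omega⟩
      refine ⟨G.cast (show d i + ((a':ℕ):ℤ) = r by push_cast at h ⊢; omega)
        (G.fpow a' (d i) (m i)), ?_⟩
      exact (G.fpow_succ_top a' (d i) r (by push_cast at h ⊢; omega) h (m i)).symm
    · exfalso; have := hD i; omega
  intro y
  obtain ⟨x, hx⟩ := hrange (hgen (r+1) y)
  exact ⟨x, hx⟩

lemma v_surj (hgen : G.Generates d m) {E : ℤ} (hE : ∀ i, E ≤ d i) {r : ℤ} (hr : r + 1 ≤ E) :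
    Function.Surjective (G.v r) := by
  have hrange : Submodule.span R (G.genSet d m r) ≤ LinearMap.range (G.v r) := by
    rw [Submodule.span_le]
    rintro y (⟨i, a, h, rfl⟩ | ⟨i, b, h, rfl⟩)
    · exfalso; have := hE i; omega
    · obtain ⟨b', rfl⟩ : ∃ b', b = b' + 1 := ⟨b - 1, by have := hE i; omega⟩
      refine ⟨G.cast (show d i - ((b':ℕ):ℤ) = r + 1 by push_cast at h ⊢; omega)
        (G.vpow b' (d i) (m i)), ?_⟩
      exact (G.vpow_succ_top b' (d i) r (by push_cast at h ⊢; omega) h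
        (by push_cast at h ⊢; omega) (m i)).symm
  intro y
  obtain ⟨x, hx⟩ := hrange (hgen r y)
  exact ⟨x, hx⟩

lemma fpow_surj {D : ℤ} (hs : ∀ r : ℤ, D ≤ r → Function.Surjective (G.f r)) (a : ℕ) :
    Function.Surjective (G.fpow a D) := by
  induction a with
  | zero =>
      intro y
      refine ⟨G.cast (show D + ((0:ℕ):ℤ) = D by simp) y, ?_⟩
      have e0 : ∀ x : G.M D, G.fpow 0 D x = G.cast (show D = D + ((0:ℕ):ℤ) by simp) x :=
        fun x => rfl
      rw [e0, cast_cast, cast_refl]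
  | succ a ih =>
      intro y
      obtain ⟨z, hz⟩ := hs (D + ((a:ℕ):ℤ)) (by omega)
        (G.cast (show D + ((a+1:ℕ):ℤ) = D + ((a:ℕ):ℤ) + 1 by push_cast; omega) y)
      obtain ⟨w, hw⟩ := ih z
      refine ⟨w, (G.cast (show D + ((a+1:ℕ):ℤ) = D + ((a:ℕ):ℤ) + 1
        by push_cast; omega)).injective ?_⟩
      rw [G.fpow_succ_top a D (D + ((a:ℕ):ℤ)) rfl
        (show D + ((a+1:ℕ):ℤ) = D + ((a:ℕ):ℤ) + 1 by push_cast; omega) w,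
        cast_refl, hw, hz]

lemma vpow_surj {E : ℤ} (hs : ∀ r : ℤ, r + 1 ≤ E → Function.Surjective (G.v r)) (b : ℕ) :
    Function.Surjective (G.vpow b E) := by
  induction b with
  | zero =>
      intro y
      refine ⟨G.cast (show E - ((0:ℕ):ℤ) = E by simp) y, ?_⟩
      have e0 : ∀ x : G.M E, G.vpow 0 E x = G.cast (show E = E - ((0:ℕ):ℤ) by simp) x :=
        fun x => rfl
      rw [e0, cast_cast, cast_refl]
  | succ b ih =>
      intro y
      obtain ⟨z, hz⟩ := hs (E - ((b:ℕ):ℤ) - 1) (by omega)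
        (G.cast (show E - ((b+1:ℕ):ℤ) = E - ((b:ℕ):ℤ) - 1 by push_cast; omega) y)
      obtain ⟨w, hw⟩ := ih
        (G.cast (show E - ((b:ℕ):ℤ) - 1 + 1 = E - ((b:ℕ):ℤ) by omega) z)
      refine ⟨w, (G.cast (show E - ((b+1:ℕ):ℤ) = E - ((b:ℕ):ℤ) - 1
        by push_cast; omega)).injective ?_⟩
      rw [G.vpow_succ_top b E (E - ((b:ℕ):ℤ) - 1) rfl
        (show E - ((b+1:ℕ):ℤ) = E - ((b:ℕ):ℤ) - 1 by push_cast; omega)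
        (show E - ((b:ℕ):ℤ) = E - ((b:ℕ):ℤ) - 1 + 1 by omega) w,
        hw, cast_cast, cast_refl, hz]

end GaugeData

theorem gauge_finiteType_tfae (p : ℕ) (hp : p.Prime) {R : Type u} [CommRing R]
    [IsNoetherianRing R] (G : GaugeData R p) (hft : G.IsFiniteType) :
    (∀ n : ℤ, Module.Finite R (G.M n)) ∧ ∃ a b : ℤ, a ≤ b ∧ G.ConcentratedIn a b := by
  obtain ⟨s, d, m, hgen⟩ := hft
  have hfin : ∀ n : ℤ, Module.Finite R (G.M n) := G.module_finite hgen
  refine ⟨hfin, ?_⟩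
  set D : ℤ := ∑ i, |d i| with hDdef
  have hD0 : 0 ≤ D := Finset.sum_nonneg fun i _ => abs_nonneg _
  have hD : ∀ i, d i ≤ D := fun i =>
    le_trans (le_abs_self _) (Finset.single_le_sum (fun j _ => abs_nonneg (d j))
      (Finset.mem_univ i))
  have hE : ∀ i, -D ≤ d i := fun i => by
    have h := Finset.single_le_sum (fun j (_ : j ∈ Finset.univ) => abs_nonneg (d j))
      (Finset.mem_univ i)
    have := neg_abs_le (d i)
    omega
  have hfs : ∀ r : ℤ, D ≤ r → Function.Surjective (G.f r) := fun r hr => G.f_surj hgen hD hr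
  have hvs : ∀ r : ℤ, r + 1 ≤ -D → Function.Surjective (G.v r) := fun r hr =>
    G.v_surj hgen hE hr
  haveI := hfin D
  haveI := hfin (-D)
  let Cf : ℕ →o Submodule R (G.M D) :=
    ⟨fun a => LinearMap.ker (G.fpow a D), monotone_nat_of_le_succ (fun a => by
      intro x hx
      rw [LinearMap.mem_ker] at hx ⊢
      exact G.fpow_zero_succ a x hx)⟩
  let Cv : ℕ →o Submodule R (G.M (-D)) :=
    ⟨fun b => LinearMap.ker (G.vpow b (-D)), monotone_nat_of_le_succ (fun b => by
      intro x hx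
      rw [LinearMap.mem_ker] at hx ⊢
      exact G.vpow_zero_succ b x hx)⟩
  obtain ⟨k₀, hk₀⟩ := monotone_stabilizes_iff_noetherian.mpr inferInstance Cf
  obtain ⟨k₁, hk₁⟩ := monotone_stabilizes_iff_noetherian.mpr inferInstance Cv
  refine ⟨-D - k₁, D + k₀, by omega, ?_, ?_⟩
  · -- v bijective for r + 1 ≤ -D - k₁
    intro r hr
    refine ⟨?_, hvs r (by omega)⟩
    apply LinearMap.ker_eq_bot.mp
    apply (Submodule.eq_bot_iff _).mpr
    intro x hx
    replace hx : G.v r x = 0 := LinearMap.mem_ker.mp hx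
    set k : ℕ := (-D - (r+1)).toNat with hkdef
    have hk : -D - ((k:ℕ):ℤ) = r + 1 := by omega
    have hk1 : k₁ ≤ k := by omega
    obtain ⟨z, hz⟩ := G.vpow_surj hvs k (G.cast hk.symm x)
    have hx0 : G.cast hk (G.vpow k (-D) z) = x := by
      rw [hz, GaugeData.cast_cast, GaugeData.cast_refl]
    have h2 : G.vpow (k+1) (-D) z = 0 := by
      have ht := G.vpow_succ_top k (-D) r (by omega) (by push_cast; omega) hk z
      rw [hx0] at ht
      exact (LinearEquiv.map_eq_zero_iff _).mp (by rw [ht, hx])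
    have hmem : z ∈ Cv (k+1) := LinearMap.mem_ker.mpr h2
    have hzz : z ∈ Cv k := by
      rw [← hk₁ k hk1, hk₁ (k+1) (by omega)]
      exact hmem
    have hzk : G.vpow k (-D) z = 0 := LinearMap.mem_ker.mp hzz
    rw [← hx0, hzk, GaugeData.cast_zero]
  · -- f bijective for D + k₀ ≤ r
    intro r hr
    refine ⟨?_, hfs r (by omega)⟩
    apply LinearMap.ker_eq_bot.mp
    apply (Submodule.eq_bot_iff _).mpr
    intro x hx
    replace hx : G.f r x = 0 := LinearMap.mem_ker.mp hx
    set k : ℕ := (r - D).toNat with hkdef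
    have hk : D + ((k:ℕ):ℤ) = r := by omega
    have hk0 : k₀ ≤ k := by omega
    obtain ⟨z, hz⟩ := G.fpow_surj hfs k (G.cast hk.symm x)
    have hx0 : G.cast hk (G.fpow k D z) = x := by
      rw [hz, GaugeData.cast_cast, GaugeData.cast_refl]
    have h2 : G.fpow (k+1) D z = 0 := by
      have ht := G.fpow_succ_top k D r hk (by push_cast; omega) z
      rw [hx0] at ht
      exact (LinearEquiv.map_eq_zero_iff _).mp (by rw [ht, hx])
    have hmem : z ∈ Cf (k+1) := LinearMap.mem_ker.mpr h2
    have hzz : z ∈ Cf k := by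
      rw [← hk₀ k hk0, hk₀ (k+1) (by omega)]
      exact hmem
    have hzk : G.fpow k D z = 0 := LinearMap.mem_ker.mp hzz
    rw [← hx0, hzk, GaugeData.cast_zero]
end

section
/- Let (D, ϕ, M) and (D', ϕ', M') be virtual crystals over k and let g : M → M' be a W-linear map, with ĝ : D → D' its unique B-linear extension. Then the following are equivalent: (i) ĝ∘ϕ = ϕ'∘ĝ; (ii) g(M^r) ⊆ M'^r for every r ∈ ℤ, and for every r and every x ∈ M^r one has ϕ'(g(x)) = p^r·g(φ_r(x)), where φ_r(x) is the unique element of M with ϕ(x) = p^r·φ_r(x). Consequently the construction of theorem 2.2.1 is fully faithful: restriction gives a bijection between morphisms of virtual crystals (W-linear maps M → M' whose B-linear extension intertwines ϕ and ϕ') and morphisms of the associated φ-gauges. -/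
open Pointwise

universe u v

variable {R : Type u} [CommRing R] {p : ℕ}

section Crystal

variable (p) [hp : Fact p.Prime] (k : Type) [Field k] [CharP k p] [PerfectRing k p]

variable (D : Type) [AddCommGroup D] [Module (FractionRing (WittVector p k)) D]
  [Module (WittVector p k) D] [IsScalarTower (WittVector p k) (FractionRing (WittVector p k)) D]
  (ϕ : D → D) (M : Submodule (WittVector p k) D)

/-- The degree-`r` component `M^r = {m ∈ M : ϕ(m) ∈ pʳ·M}` of the gauge associated to a
virtual crystal `(D, ϕ, M)`. -/
def crystalComponentSet (r : ℤ) : Set D :=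
  {x | x ∈ M ∧ ϕ x ∈ (p : FractionRing (WittVector p k)) ^ r • (M : Set D)}

/-- `M^r` as a `W(k)`-submodule of `D` (given that `ϕ` is additive and `σ`-semilinear,
where `σB` is induced by the Witt-vector Frobenius). -/
def crystalComponent
    (σB : FractionRing (WittVector p k) ≃+* FractionRing (WittVector p k))
    (hσB : ∀ w : WittVector p k,
      σB (algebraMap (WittVector p k) (FractionRing (WittVector p k)) w) =
        algebraMap (WittVector p k) (FractionRing (WittVector p k))
          (WittVector.frobeniusEquiv p k w))
    (hadd : ∀ x y : D, ϕ (x + y) = ϕ x + ϕ y)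
    (hsemi : ∀ (c : FractionRing (WittVector p k)) (x : D), ϕ (c • x) = σB c • ϕ x)
    (r : ℤ) : Submodule (WittVector p k) D where
  carrier := crystalComponentSet p k D ϕ M r
  add_mem' := by
    rintro x y ⟨hxM, hx⟩ ⟨hyM, hy⟩
    obtain ⟨m1, hm1, hx⟩ := Set.mem_smul_set.mp hx
    obtain ⟨m2, hm2, hy⟩ := Set.mem_smul_set.mp hy
    exact ⟨M.add_mem hxM hyM, Set.mem_smul_set.mpr
      ⟨m1 + m2, M.add_mem hm1 hm2, by rw [smul_add, hx, hy, hadd]⟩⟩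
  zero_mem' := by
    have h0 : ϕ 0 = 0 := by
      have h := hadd 0 0
      rw [add_zero] at h
      exact (left_eq_add.mp h)
    exact ⟨M.zero_mem, Set.mem_smul_set.mpr ⟨0, M.zero_mem, by rw [smul_zero, h0]⟩⟩
  smul_mem' := by
    rintro c x ⟨hxM, hx⟩
    obtain ⟨m1, hm1, hx⟩ := Set.mem_smul_set.mp hx
    refine ⟨M.smul_mem c hxM, Set.mem_smul_set.mpr
      ⟨(WittVector.frobeniusEquiv p k c) • m1, M.smul_mem _ hm1, ?_⟩⟩
    have h1 : c • x = (algebraMap (WittVector p k) (FractionRing (WittVector p k)) c) • x :=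
      (algebraMap_smul (FractionRing (WittVector p k)) c x).symm
    have h2 : ϕ (c • x) = (p : FractionRing (WittVector p k)) ^ r •
        ((WittVector.frobeniusEquiv p k c) • m1) := by
      rw [h1, hsemi, hσB, ← hx, smul_comm, algebraMap_smul]
    exact h2.symm

/-- The gauge associated to a virtual crystal `(D, ϕ, M)`: the components are the
`M^r = {m ∈ M : ϕ(m) ∈ pʳ·M}`, `f` is multiplication by `p` and `v` is the inclusion. -/
noncomputable def crystalGauge
    (σB : FractionRing (WittVector p k) ≃+* FractionRing (WittVector p k))
    (hσB : ∀ w : WittVector p k,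
      σB (algebraMap (WittVector p k) (FractionRing (WittVector p k)) w) =
        algebraMap (WittVector p k) (FractionRing (WittVector p k))
          (WittVector.frobeniusEquiv p k w))
    (hadd : ∀ x y : D, ϕ (x + y) = ϕ x + ϕ y)
    (hsemi : ∀ (c : FractionRing (WittVector p k)) (x : D), ϕ (c • x) = σB c • ϕ x) :
    GaugeData (WittVector p k) p where
  M r := ↥(crystalComponent p k D ϕ M σB hσB hadd hsemi r)
  f r := LinearMap.codRestrict (crystalComponent p k D ϕ M σB hσB hadd hsemi (r + 1))
    ((p : WittVector p k) • (crystalComponent p k D ϕ M σB hσB hadd hsemi r).subtype)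
    (by
      rintro ⟨x, hxM, hx⟩
      obtain ⟨m1, hm1, hx⟩ := Set.mem_smul_set.mp hx
      simp only [LinearMap.smul_apply, Submodule.subtype_apply]
      have h1 : (p : WittVector p k) • x = ((p : FractionRing (WittVector p k)) • x : D) := by
        rw [← algebraMap_smul (FractionRing (WittVector p k))
          ((p : ℕ) : WittVector p k) x, map_natCast]
      refine ⟨M.smul_mem _ hxM, Set.mem_smul_set.mpr ⟨m1, hm1, ?_⟩⟩
      rw [h1, hsemi, map_natCast, ← hx, smul_smul]
      congr 1
      rw [zpow_add_one₀ (WittVector.FractionRing.p_nonzero p k), mul_comm])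
  v r := LinearMap.codRestrict (crystalComponent p k D ϕ M σB hσB hadd hsemi r)
    ((crystalComponent p k D ϕ M σB hσB hadd hsemi (r + 1)).subtype)
    (by
      rintro ⟨x, hxM, hx⟩
      obtain ⟨m1, hm1, hx⟩ := Set.mem_smul_set.mp hx
      simp only [Submodule.subtype_apply]
      refine ⟨hxM, Set.mem_smul_set.mpr ⟨(p : WittVector p k) • m1, M.smul_mem _ hm1, ?_⟩⟩
      have h1 : (p : WittVector p k) • m1 = ((p : FractionRing (WittVector p k)) • m1 : D) := by
        rw [← algebraMap_smul (FractionRing (WittVector p k))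
          ((p : ℕ) : WittVector p k) m1, map_natCast]
      rw [h1, ← hx, smul_smul]
      congr 1
      rw [zpow_add_one₀ (WittVector.FractionRing.p_nonzero p k)])
  fv := by
    intro r x
    apply Subtype.ext
    simp
  vf := by
    intro r x
    apply Subtype.ext
    simp

end Crystal

section Helpers

variable (p : ℕ) [hp : Fact p.Prime] (k : Type) [Field k] [CharP k p] [PerfectRing k p]

lemma algMap_p_pow (n : ℕ) :
    algebraMap (WittVector p k) (FractionRing (WittVector p k)) ((p : WittVector p k) ^ n)
      = (p : FractionRing (WittVector p k)) ^ n := by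
  rw [map_pow, map_natCast]

/-- Every element of the fraction field of `W(k)` becomes integral after multiplying by a
power of `p`. -/
lemma exists_p_pow_mul (c : FractionRing (WittVector p k)) :
    ∃ (n : ℕ) (w : WittVector p k),
      (p : FractionRing (WittVector p k)) ^ n * c
        = algebraMap (WittVector p k) (FractionRing (WittVector p k)) w := by
  obtain ⟨a, b, hb, hab⟩ := IsFractionRing.div_surjective (A := WittVector p k) c
  have hb0 : b ≠ 0 := nonZeroDivisors.ne_zero hb
  obtain ⟨m, u, hu⟩ := WittVector.exists_eq_pow_p_mul' b hb0
  set A := algebraMap (WittVector p k) (FractionRing (WittVector p k))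
  have hu1 : A ↑u * A ↑u⁻¹ = 1 := by rw [← map_mul, Units.mul_inv, map_one]
  have hU : A ↑u ≠ 0 := fun h0 => by
    rw [h0, zero_mul] at hu1; exact zero_ne_one hu1
  have hpm : (p : FractionRing (WittVector p k)) ^ m ≠ 0 :=
    pow_ne_zero _ (WittVector.FractionRing.p_nonzero p k)
  refine ⟨m, a * ↑u⁻¹, ?_⟩
  have hbB : A b = (p : FractionRing (WittVector p k)) ^ m * A ↑u := by
    rw [hu, map_mul, algMap_p_pow]
  rw [← hab, hbB, map_mul, mul_div_assoc', div_eq_iff (mul_ne_zero hpm hU),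
    show A a * A ↑u⁻¹ * ((p : FractionRing (WittVector p k)) ^ m * A ↑u)
      = (p : FractionRing (WittVector p k)) ^ m * A a * (A ↑u * A ↑u⁻¹) by ring, hu1, mul_one]

variable {N : Type} [AddCommMonoid N] [Module (FractionRing (WittVector p k)) N]
  [Module (WittVector p k) N]
  [IsScalarTower (WittVector p k) (FractionRing (WittVector p k)) N]

lemma WB_smul (c : ℕ) (x : N) :
    ((p : WittVector p k) ^ c) • x = ((p : FractionRing (WittVector p k)) ^ c) • x := by
  rw [← algebraMap_smul (FractionRing (WittVector p k)) ((p : WittVector p k) ^ c) x,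
    algMap_p_pow]

lemma pPow_smul_mem {M : Submodule (WittVector p k) N} {m : N} (hm : m ∈ M) (c : ℕ) :
    ((p : FractionRing (WittVector p k)) ^ c) • m ∈ M := by
  rw [← WB_smul]; exact M.smul_mem _ hm

lemma exists_pPow_smul_mem {M : Submodule (WittVector p k) N}
    (hspan : Submodule.span (FractionRing (WittVector p k)) (M : Set N) = ⊤) (x : N) :
    ∃ n : ℕ, ((p : FractionRing (WittVector p k)) ^ n) • x ∈ M := by
  have hx : x ∈ Submodule.span (FractionRing (WittVector p k)) (M : Set N) := by
    rw [hspan]; exact Submodule.mem_top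
  induction hx using Submodule.span_induction with
  | mem y hy => exact ⟨0, by simpa using hy⟩
  | zero => exact ⟨0, by simp⟩
  | add y z _ _ hy hz =>
      obtain ⟨ny, hy⟩ := hy
      obtain ⟨nz, hz⟩ := hz
      refine ⟨ny + nz, ?_⟩
      rw [smul_add]
      refine M.add_mem ?_ ?_
      · rw [add_comm, pow_add, mul_smul]; exact pPow_smul_mem p k hy nz
      · rw [pow_add, mul_smul]; exact pPow_smul_mem p k hz ny
  | smul c y _ hy =>
      obtain ⟨n, hn⟩ := hy
      obtain ⟨m, w, hw⟩ := exists_p_pow_mul p k c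
      refine ⟨m + n, ?_⟩
      have : ((p : FractionRing (WittVector p k)) ^ (m + n)) • (c • y)
          = ((p : FractionRing (WittVector p k)) ^ m * c) •
              (((p : FractionRing (WittVector p k)) ^ n) • y) := by
        rw [smul_smul, smul_smul, pow_add]; ring_nf
      rw [this, hw, algebraMap_smul]
      exact M.smul_mem _ hn

end Helpers

section Intertwine

variable (p : ℕ) [hp : Fact p.Prime] (k : Type) [Field k] [CharP k p] [PerfectRing k p]
  (σB : FractionRing (WittVector p k) ≃+* FractionRing (WittVector p k))
  (D : Type) [AddCommGroup D] [Module (FractionRing (WittVector p k)) D]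
  [Module (WittVector p k) D]
  [IsScalarTower (WittVector p k) (FractionRing (WittVector p k)) D]
  (ϕ : D → D)
  (M : Submodule (WittVector p k) D)
  (D' : Type) [AddCommGroup D'] [Module (FractionRing (WittVector p k)) D']
  (ϕ' : D' → D')

/-- If a linear map commutes with the divided Frobenii, it intertwines `ϕ` and `ϕ'`. -/
lemma intertwine_of_divided_frobenius
    (hsemi : ∀ (c : FractionRing (WittVector p k)) (x : D), ϕ (c • x) = σB c • ϕ x)
    (hspan : Submodule.span (FractionRing (WittVector p k)) (M : Set D) = ⊤)
    (hsemi' : ∀ (c : FractionRing (WittVector p k)) (x : D'), ϕ' (c • x) = σB c • ϕ' x)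
    (g : D →ₗ[FractionRing (WittVector p k)] D')
    (h2 : ∀ (r : ℤ) (x y : D), x ∈ crystalComponentSet p k D ϕ M r → y ∈ M →
      ϕ x = (p : FractionRing (WittVector p k)) ^ r • y →
      ϕ' (g x) = (p : FractionRing (WittVector p k)) ^ r • g y) :
    ∀ x : D, g (ϕ x) = ϕ' (g x) := by
  intro x
  have hp0 : (p : FractionRing (WittVector p k)) ≠ 0 := WittVector.FractionRing.p_nonzero p k
  obtain ⟨n, hn⟩ := exists_pPow_smul_mem p k hspan x
  set m : D := ((p : FractionRing (WittVector p k)) ^ n) • x with hm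
  obtain ⟨a, ha⟩ := exists_pPow_smul_mem p k hspan (ϕ m)
  set y : D := ((p : FractionRing (WittVector p k)) ^ a) • ϕ m with hy
  have hϕm : ϕ m = (p : FractionRing (WittVector p k)) ^ (-(a : ℤ)) • y := by
    rw [hy]
    have : (p : FractionRing (WittVector p k)) ^ (-(a : ℤ)) •
        ((p : FractionRing (WittVector p k)) ^ a) • ϕ m
        = ((p : FractionRing (WittVector p k)) ^ (-(a : ℤ)) *
            (p : FractionRing (WittVector p k)) ^ ((a : ℕ) : ℤ)) • ϕ m := by
      rw [mul_smul, zpow_natCast]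
    rw [this, ← zpow_add₀ hp0]
    simp
  have hmr : m ∈ crystalComponentSet p k D ϕ M (-(a : ℤ)) :=
    ⟨hn, Set.mem_smul_set.mpr ⟨y, ha, hϕm.symm⟩⟩
  have key := h2 (-(a : ℤ)) m y hmr ha hϕm
  have e : g (ϕ m) = ϕ' (g m) := by rw [hϕm, map_smul, key]
  have el : g (ϕ m) = ((p : FractionRing (WittVector p k)) ^ n) • g (ϕ x) := by
    rw [hm, hsemi, map_pow, map_natCast, map_smul]
  have er : ϕ' (g m) = ((p : FractionRing (WittVector p k)) ^ n) • ϕ' (g x) := by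
    rw [hm, map_smul, hsemi', map_pow, map_natCast]
  refine smul_right_injective D' (pow_ne_zero n hp0) ?_
  show ((p : FractionRing (WittVector p k)) ^ n) • g (ϕ x)
      = ((p : FractionRing (WittVector p k)) ^ n) • ϕ' (g x)
  rw [← el, ← er]; exact e

end Intertwine

/-- Full faithfulness of the functor from virtual crystals to φ-gauges: for a `W(k)`-linear
map `g : M → M'` with (unique) `B`-linear extension `ĝ : D → D'`, `ĝ` intertwines `ϕ` and
`ϕ'` iff `g` maps `M^r` into `M'^r` for all `r` and commutes with the divided Frobenii; and
every morphism of the associated φ-gauges arises from a unique such `ĝ`. -/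
theorem crystal_functor_fully_faithful (p : ℕ) [hp : Fact p.Prime] (k : Type) [Field k]
    [CharP k p] [PerfectRing k p]
    (σB : FractionRing (WittVector p k) ≃+* FractionRing (WittVector p k))
    (hσB : ∀ w : WittVector p k,
      σB (algebraMap (WittVector p k) (FractionRing (WittVector p k)) w) =
        algebraMap (WittVector p k) (FractionRing (WittVector p k))
          (WittVector.frobeniusEquiv p k w))
    -- the first virtual crystal (D, ϕ, M)
    (D : Type) [AddCommGroup D]
    [Module (FractionRing (WittVector p k)) D] [Module (WittVector p k) D]
    [IsScalarTower (WittVector p k) (FractionRing (WittVector p k)) D]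
    [Module.Finite (FractionRing (WittVector p k)) D]
    (ϕ : D → D) (hadd : ∀ x y : D, ϕ (x + y) = ϕ x + ϕ y) (hbij : Function.Bijective ϕ)
    (hsemi : ∀ (c : FractionRing (WittVector p k)) (x : D), ϕ (c • x) = σB c • ϕ x)
    (M : Submodule (WittVector p k) D) (hfg : M.FG)
    (hspan : Submodule.span (FractionRing (WittVector p k)) (M : Set D) = ⊤)
    -- the second virtual crystal (D', ϕ', M')
    (D' : Type) [AddCommGroup D']
    [Module (FractionRing (WittVector p k)) D'] [Module (WittVector p k) D']
    [IsScalarTower (WittVector p k) (FractionRing (WittVector p k)) D']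
    [Module.Finite (FractionRing (WittVector p k)) D']
    (ϕ' : D' → D') (hadd' : ∀ x y : D', ϕ' (x + y) = ϕ' x + ϕ' y)
    (hbij' : Function.Bijective ϕ')
    (hsemi' : ∀ (c : FractionRing (WittVector p k)) (x : D'), ϕ' (c • x) = σB c • ϕ' x)
    (M' : Submodule (WittVector p k) D') (hfg' : M'.FG)
    (hspan' : Submodule.span (FractionRing (WittVector p k)) (M' : Set D') = ⊤) :
    -- (i) ⇔ (ii)
    (∀ g : D →ₗ[FractionRing (WittVector p k)] D', (∀ x ∈ M, g x ∈ M') →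
      ((∀ x : D, g (ϕ x) = ϕ' (g x)) ↔
        ((∀ (r : ℤ) (x : D), x ∈ crystalComponentSet p k D ϕ M r →
            g x ∈ crystalComponentSet p k D' ϕ' M' r) ∧
          (∀ (r : ℤ) (x y : D), x ∈ crystalComponentSet p k D ϕ M r → y ∈ M →
            ϕ x = (p : FractionRing (WittVector p k)) ^ r • y →
            ϕ' (g x) = (p : FractionRing (WittVector p k)) ^ r • g y)))) ∧
    -- fullness: every morphism of the associated φ-gauges comes from a unique morphism of
    -- virtual crystals
    (∀ g₀ : ↥M →ₗ[WittVector p k] D', (∀ x : ↥M, g₀ x ∈ M') →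
      (∀ (r : ℤ) (x : ↥M), (x : D) ∈ crystalComponentSet p k D ϕ M r →
        g₀ x ∈ crystalComponentSet p k D' ϕ' M' r) →
      (∀ (r : ℤ) (x y : ↥M), (x : D) ∈ crystalComponentSet p k D ϕ M r →
        ϕ (x : D) = (p : FractionRing (WittVector p k)) ^ r • (y : D) →
        ϕ' (g₀ x) = (p : FractionRing (WittVector p k)) ^ r • g₀ y) →
      ∃! g : D →ₗ[FractionRing (WittVector p k)] D',
        (∀ x : ↥M, g (x : D) = g₀ x) ∧ (∀ x : D, g (ϕ x) = ϕ' (g x))) := by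
  classical
  have hp0 : (p : FractionRing (WittVector p k)) ≠ 0 := WittVector.FractionRing.p_nonzero p k
  constructor
  · -- Part 1: (i) ⇔ (ii)
    intro g hMM'
    constructor
    · intro hcomm
      constructor
      · rintro r x ⟨hxM, hx⟩
        obtain ⟨y, hy, hxy⟩ := Set.mem_smul_set.mp hx
        refine ⟨hMM' x hxM, Set.mem_smul_set.mpr ⟨g y, hMM' y hy, ?_⟩⟩
        calc (p : FractionRing (WittVector p k)) ^ r • g y
            = g ((p : FractionRing (WittVector p k)) ^ r • y) := (map_smul g _ _).symm
          _ = g (ϕ x) := by rw [hxy]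
          _ = ϕ' (g x) := hcomm x
      · intro r x y hxr hyM hxy
        rw [← hcomm, hxy, map_smul]
    · rintro ⟨h1, h2⟩
      exact intertwine_of_divided_frobenius p k σB D ϕ M D' ϕ' hsemi hspan hsemi' g h2
  · -- Part 2: fullness
    intro g₀ hg₀M hg1 hg2
    have hclear := exists_pPow_smul_mem p k (M := M) hspan
    choose nn hnn using hclear
    set F : D → D' := fun x =>
      ((p : FractionRing (WittVector p k)) ^ (-(nn x : ℤ))) • g₀ ⟨_, hnn x⟩ with hFdef
    have hshift : ∀ (x : D) (a c : ℕ)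
        (ha : ((p : FractionRing (WittVector p k)) ^ a) • x ∈ M)
        (hc : ((p : FractionRing (WittVector p k)) ^ c) •
          (((p : FractionRing (WittVector p k)) ^ a) • x) ∈ M),
        g₀ ⟨_, hc⟩ = ((p : FractionRing (WittVector p k)) ^ c) • g₀ ⟨_, ha⟩ := by
      intro x a c ha hc
      have e1 : (⟨_, hc⟩ : ↥M) = ((p : WittVector p k) ^ c) • (⟨_, ha⟩ : ↥M) := by
        apply Subtype.ext
        rw [Submodule.coe_smul]
        exact (WB_smul p k c _).symm
      rw [e1, map_smul]
      exact WB_smul p k c _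
    have hindep : ∀ (x : D) (a b : ℕ)
        (ha : ((p : FractionRing (WittVector p k)) ^ a) • x ∈ M)
        (hb : ((p : FractionRing (WittVector p k)) ^ b) • x ∈ M),
        ((p : FractionRing (WittVector p k)) ^ (-(a : ℤ))) • g₀ ⟨_, ha⟩
          = ((p : FractionRing (WittVector p k)) ^ (-(b : ℤ))) • g₀ ⟨_, hb⟩ := by
      intro x a b ha hb
      have hab := pPow_smul_mem p k ha b
      have hba := pPow_smul_mem p k hb a
      have hkey : g₀ ⟨_, hab⟩ = g₀ ⟨_, hba⟩ := by
        congr 1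
        apply Subtype.ext
        show ((p : FractionRing (WittVector p k)) ^ b) •
            (((p : FractionRing (WittVector p k)) ^ a) • x)
            = ((p : FractionRing (WittVector p k)) ^ a) •
              (((p : FractionRing (WittVector p k)) ^ b) • x)
        rw [smul_smul, smul_smul, mul_comm]
      have h1 := hshift x a b ha hab
      have h2' := hshift x b a hb hba
      refine smul_right_injective D' (pow_ne_zero (a + b) hp0) ?_
      show ((p : FractionRing (WittVector p k)) ^ (a + b)) •
          (((p : FractionRing (WittVector p k)) ^ (-(a : ℤ))) • g₀ ⟨_, ha⟩)
          = ((p : FractionRing (WittVector p k)) ^ (a + b)) •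
            (((p : FractionRing (WittVector p k)) ^ (-(b : ℤ))) • g₀ ⟨_, hb⟩)
      rw [smul_smul, smul_smul]
      have ea : ((p : FractionRing (WittVector p k)) ^ (a + b)) *
          (p : FractionRing (WittVector p k)) ^ (-(a : ℤ))
          = (p : FractionRing (WittVector p k)) ^ b := by
        rw [← zpow_natCast (p : FractionRing (WittVector p k)) (a + b),
          ← zpow_add₀ hp0, ← zpow_natCast (p : FractionRing (WittVector p k)) b]
        congr 1
        push_cast
        ring
      have eb : ((p : FractionRing (WittVector p k)) ^ (a + b)) *
          (p : FractionRing (WittVector p k)) ^ (-(b : ℤ))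
          = (p : FractionRing (WittVector p k)) ^ a := by
        rw [← zpow_natCast (p : FractionRing (WittVector p k)) (a + b),
          ← zpow_add₀ hp0, ← zpow_natCast (p : FractionRing (WittVector p k)) a]
        congr 1
        push_cast
        ring
      rw [ea, eb, ← h1, ← h2', hkey]
    have hFval : ∀ (x : D) (n : ℕ)
        (h : ((p : FractionRing (WittVector p k)) ^ n) • x ∈ M),
        F x = ((p : FractionRing (WittVector p k)) ^ (-(n : ℤ))) • g₀ ⟨_, h⟩ :=
      fun x n h => hindep x (nn x) n (hnn x) h
    have hFadd : ∀ x y : D, F (x + y) = F x + F y := by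
      intro x y
      have hx' : ((p : FractionRing (WittVector p k)) ^ (nn x + nn y)) • x ∈ M := by
        rw [add_comm, pow_add, mul_smul]; exact pPow_smul_mem p k (hnn x) (nn y)
      have hy' : ((p : FractionRing (WittVector p k)) ^ (nn x + nn y)) • y ∈ M := by
        rw [pow_add, mul_smul]; exact pPow_smul_mem p k (hnn y) (nn x)
      have hxy' : ((p : FractionRing (WittVector p k)) ^ (nn x + nn y)) • (x + y) ∈ M := by
        rw [smul_add]; exact M.add_mem hx' hy'
      rw [hFval (x + y) _ hxy', hFval x _ hx', hFval y _ hy']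
      have e : (⟨_, hxy'⟩ : ↥M) = ⟨_, hx'⟩ + ⟨_, hy'⟩ := by
        apply Subtype.ext; exact smul_add _ x y
      rw [e, map_add, smul_add]
    have hFsmul : ∀ (w : WittVector p k) (x : D), F (w • x) = w • F x := by
      intro w x
      have hx' : ((p : FractionRing (WittVector p k)) ^ (nn x)) • (w • x) ∈ M := by
        rw [show ((p : FractionRing (WittVector p k)) ^ (nn x)) • (w • x)
            = w • (((p : FractionRing (WittVector p k)) ^ (nn x)) • x) from
          (smul_comm w _ x).symm]
        exact M.smul_mem w (hnn x)
      rw [hFval (w • x) _ hx', hFval x _ (hnn x)]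
      have e : (⟨_, hx'⟩ : ↥M) = w • ⟨_, hnn x⟩ := by
        apply Subtype.ext
        rw [Submodule.coe_smul]
        exact (smul_comm w _ x).symm
      rw [e, map_smul]
      exact (smul_comm w _ _).symm
    let g₁ : D →ₗ[WittVector p k] D' :=
      { toFun := F, map_add' := hFadd, map_smul' := hFsmul }
    let g : D →ₗ[FractionRing (WittVector p k)] D' :=
      g₁.extendScalarsOfIsLocalization (nonZeroDivisors (WittVector p k))
        (FractionRing (WittVector p k))
    have hgF : ∀ x : D, g x = F x := fun _ => rfl
    have hgext : ∀ x : ↥M, g (x : D) = g₀ x := by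
      intro x
      have h0 : ((p : FractionRing (WittVector p k)) ^ 0) • (x : D) ∈ M := by
        simpa using x.2
      rw [hgF, hFval _ 0 h0]
      have e : (⟨_, h0⟩ : ↥M) = x := Subtype.ext (by simp)
      rw [e]
      norm_num
    have hgcomm : ∀ x : D, g (ϕ x) = ϕ' (g x) := by
      refine intertwine_of_divided_frobenius p k σB D ϕ M D' ϕ' hsemi hspan hsemi' g ?_
      intro r x y hxr hyM hxy
      have e1 : g x = g₀ ⟨x, hxr.1⟩ := hgext ⟨x, hxr.1⟩
      have e2 : g y = g₀ ⟨y, hyM⟩ := hgext ⟨y, hyM⟩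
      rw [e1, e2]
      exact hg2 r ⟨x, hxr.1⟩ ⟨y, hyM⟩ hxr hxy
    refine ⟨g, ⟨hgext, hgcomm⟩, ?_⟩
    rintro g' ⟨hext', -⟩
    refine LinearMap.ext_on hspan ?_
    intro x hx
    exact (hext' ⟨x, hx⟩).trans (hgext ⟨x, hx⟩).symm
end

section
/- Let R be a commutative ring and let M be a quasi-rigid gauge over R. If some component M^s has finite length as an R-module, then every component M^r has finite length, and all components have the same length. -/
universe u v

variable {R : Type u} [CommRing R] {p : ℕ}

/-- A gauge is quasi-rigid if `ker f = im v` and `ker v = im f` at every spot, i.e. the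
sequence `M r → M (r+1) → M r → M (r+1)` (maps `f, v, f`) is exact. -/
def GaugeData.IsQuasiRigid (G : GaugeData R p) : Prop :=
  ∀ r : ℤ, LinearMap.ker (G.f r) = LinearMap.range (G.v r) ∧
    LinearMap.ker (G.v r) = LinearMap.range (G.f r)


section AuxLength

universe w w'

variable {R : Type u} [CommRing R]

/-- `M` has a composition series of length `c`. -/
def HasLen (R : Type u) [CommRing R] (M : Type w) [AddCommGroup M] [Module R M] (c : ℕ) : Prop :=
  ∃ cs : CompositionSeries (Submodule R M), cs.head = ⊥ ∧ cs.last = ⊤ ∧ cs.length = c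

theorem HasLen.isFiniteLength {M : Type w} [AddCommGroup M] [Module R M] {c : ℕ}
    (h : HasLen R M c) : IsFiniteLength R M :=
  isFiniteLength_of_exists_compositionSeries ⟨h.choose, h.choose_spec.1, h.choose_spec.2.1⟩

theorem hasLen_unique {M : Type w} [AddCommGroup M] [Module R M] {c c' : ℕ}
    (h : HasLen R M c) (h' : HasLen R M c') : c = c' := by
  obtain ⟨cs, h1, h2, rfl⟩ := h
  obtain ⟨cs', h1', h2', rfl⟩ := h'
  exact (CompositionSeries.jordan_holder cs cs' (h1.trans h1'.symm)
    (h2.trans h2'.symm)).length_eq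

theorem exists_hasLen {M : Type w} [AddCommGroup M] [Module R M] (h : IsFiniteLength R M) :
    ∃ c, HasLen R M c := by
  obtain ⟨cs, h1, h2⟩ := isFiniteLength_iff_exists_compositionSeries.mp h
  exact ⟨cs.length, cs, h1, h2, rfl⟩

theorem HasLen.congr {M : Type w} {N : Type w'} [AddCommGroup M] [Module R M]
    [AddCommGroup N] [Module R N] (e : M ≃ₗ[R] N) {c : ℕ} (h : HasLen R M c) :
    HasLen R N c := by
  obtain ⟨cs, h1, h2, h3⟩ := h
  let g : Submodule R M ≃o Submodule R N := Submodule.orderIsoMapComap e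
  refine ⟨cs.map ⟨fun x => g x, fun {a b} hab => (apply_covBy_apply_iff g).mpr hab⟩,
    ?_, ?_, ?_⟩
  · show g cs.head = ⊥
    rw [h1]; exact OrderIso.map_bot g
  · show g cs.last = ⊤
    rw [h2]; exact OrderIso.map_top g
  · exact h3

theorem covBy_map_subtype {N : Type w} [AddCommGroup N] [Module R N] (K : Submodule R N)
    {x y : Submodule R K} (h : x ⋖ y) : x.map K.subtype ⋖ y.map K.subtype := by
  have h1 : Submodule.MapSubtype.orderIso K x ⋖ Submodule.MapSubtype.orderIso K y :=
    (apply_covBy_apply_iff (Submodule.MapSubtype.orderIso K)).mpr h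
  have hoc : (Set.range (OrderEmbedding.subtype
      fun c : Submodule R N => c ≤ K)).OrdConnected := by
    rw [OrderEmbedding.coe_subtype, Subtype.range_coe_subtype]
    exact ⟨fun a _ b hb c hc => le_trans hc.2 hb⟩
  exact (hoc.apply_covBy_apply_iff
    (OrderEmbedding.subtype fun c : Submodule R N => c ≤ K)).mpr h1

theorem covBy_comap_mkQ {N : Type w} [AddCommGroup N] [Module R N] (K : Submodule R N)
    {x y : Submodule R (N ⧸ K)} (h : x ⋖ y) : x.comap K.mkQ ⋖ y.comap K.mkQ := by
  have h1 : Submodule.comapMkQRelIso K x ⋖ Submodule.comapMkQRelIso K y :=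
    (apply_covBy_apply_iff (Submodule.comapMkQRelIso K)).mpr h
  have hoc : (Set.range (OrderEmbedding.subtype
      fun c : Submodule R N => K ≤ c)).OrdConnected := by
    rw [OrderEmbedding.coe_subtype, Subtype.range_coe_subtype]
    exact ⟨fun a ha b _ c hc => le_trans ha hc.1⟩
  exact (hoc.apply_covBy_apply_iff
    (OrderEmbedding.subtype fun c : Submodule R N => K ≤ c)).mpr h1

theorem HasLen.extension {N : Type w} [AddCommGroup N] [Module R N] (K : Submodule R N)
    {a b : ℕ} (hK : HasLen R K a) (hQ : HasLen R (N ⧸ K) b) : HasLen R N (a + b) := by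
  obtain ⟨c1, k1, k2, k3⟩ := hK
  obtain ⟨c2, q1, q2, q3⟩ := hQ
  let d1 : CompositionSeries (Submodule R N) := c1.map ⟨fun x => x.map K.subtype, fun {x y} hab => covBy_map_subtype K hab⟩
  let d2 : CompositionSeries (Submodule R N) := c2.map ⟨fun x => x.comap K.mkQ, fun {x y} hab => covBy_comap_mkQ K hab⟩
  have hconn : d1.last = d2.head := by
    show (c1.last).map K.subtype = (c2.head).comap K.mkQ
    rw [k2, q1, Submodule.map_subtype_top, Submodule.comap_bot, Submodule.ker_mkQ]
  refine ⟨d1.smash d2 hconn, ?_, ?_, ?_⟩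
  · rw [RelSeries.head_smash]
    show (c1.head).map K.subtype = ⊥
    rw [k1]; exact Submodule.map_bot _
  · rw [RelSeries.last_smash]
    show (c2.last).comap K.mkQ = ⊤
    rw [q2]; exact Submodule.comap_top _
  · show c1.length + c2.length = a + b
    rw [k3, q3]

theorem HasLen.step {A : Type w} {B : Type w'} [AddCommGroup A] [Module R A]
    [AddCommGroup B] [Module R B] (φ : A →ₗ[R] B) (ψ : B →ₗ[R] A)
    (h1 : LinearMap.ker φ = LinearMap.range ψ) (h2 : LinearMap.ker ψ = LinearMap.range φ)
    {c : ℕ} (h : HasLen R A c) : HasLen R B c := by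
  have hA : IsFiniteLength R A := h.isFiniteLength
  obtain ⟨hNoe, hArt⟩ := isFiniteLength_iff_isNoetherian_isArtinian.mp hA
  obtain ⟨a, ha⟩ := exists_hasLen (R := R) (M := LinearMap.ker φ)
    (isFiniteLength_iff_isNoetherian_isArtinian.mpr ⟨inferInstance, inferInstance⟩)
  obtain ⟨b, hb⟩ := exists_hasLen (R := R) (M := A ⧸ LinearMap.ker φ)
    (isFiniteLength_iff_isNoetherian_isArtinian.mpr ⟨inferInstance, inferInstance⟩)
  have hc : a + b = c := hasLen_unique (HasLen.extension _ ha hb) h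
  have hkψ : HasLen R (LinearMap.ker ψ) b :=
    hb.congr ((φ.quotKerEquivRange).trans (LinearEquiv.ofEq _ _ h2.symm))
  have hqψ : HasLen R (B ⧸ LinearMap.ker ψ) a :=
    ha.congr (((ψ.quotKerEquivRange).trans (LinearEquiv.ofEq _ _ h1.symm)).symm)
  have := HasLen.extension (LinearMap.ker ψ) hkψ hqψ
  rwa [Nat.add_comm, hc] at this

end AuxLength

theorem gauge_quasiRigid_length_constant (p : ℕ) (hp : p.Prime) {R : Type u} [CommRing R]
    (G : GaugeData R p) (hqr : G.IsQuasiRigid) (s : ℤ) (hs : IsFiniteLength R (G.M s)) :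
    (∀ r : ℤ, IsFiniteLength R (G.M r)) ∧
      ∃ c : ℕ, ∀ r : ℤ, ∃ cs : CompositionSeries (Submodule R (G.M r)),
        cs.head = ⊥ ∧ cs.last = ⊤ ∧ cs.length = c := by
  obtain ⟨c, hc⟩ := exists_hasLen hs
  have stepUp : ∀ r : ℤ, HasLen R (G.M r) c → HasLen R (G.M (r + 1)) c := fun r h =>
    h.step (G.f r) (G.v r) (hqr r).1 (hqr r).2
  have stepDown : ∀ r : ℤ, HasLen R (G.M (r + 1)) c → HasLen R (G.M r) c := fun r h =>
    h.step (G.v r) (G.f r) (hqr r).2 (hqr r).1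
  have up : ∀ (n : ℕ) (r : ℤ), HasLen R (G.M r) c → HasLen R (G.M (r + n)) c := by
    intro n
    induction n with
    | zero => intro r h; exact h.congr (G.cast (show r = r + ((0 : ℕ) : ℤ) by simp))
    | succ n ih =>
        intro r h
        have := stepUp (r + n) (ih r h)
        exact this.congr (G.cast (by push_cast; ring))
  have down : ∀ (n : ℕ) (r : ℤ), HasLen R (G.M r) c → HasLen R (G.M (r - n)) c := by
    intro n
    induction n with
    | zero => intro r h; exact h.congr (G.cast (show r = r - ((0 : ℕ) : ℤ) by simp))
    | succ n ih =>
        intro r h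
        have h1 : HasLen R (G.M (r - n)) c := ih r h
        have h2 : HasLen R (G.M (r - n - 1 + 1)) c := h1.congr (G.cast (by ring))
        have := stepDown (r - n - 1) h2
        exact this.congr (G.cast (by push_cast; ring))
  have key : ∀ r : ℤ, HasLen R (G.M r) c := by
    intro r
    rcases le_or_gt s r with hle | hlt
    · have := up (r - s).toNat s hc
      exact this.congr (G.cast (by rw [Int.toNat_of_nonneg (by omega)]; ring))
    · have := down (s - r).toNat s hc
      exact this.congr (G.cast (by rw [Int.toNat_of_nonneg (by omega)]; ring))
  exact ⟨fun r => (key r).isFiniteLength, c, fun r => key r⟩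
end

section
/- Let k be a perfect field of characteristic p > 0 and W = W(k). Let (M, f, v, φ) be a φ-gauge over W of finite type concentrated in [0,b] whose underlying gauge is free, so φ : M^b → M^0 is a σ-semilinear bijection. Set L = M^0 and let ϕ = φ∘f^b : L → L (a σ-semilinear map). Then for every 0 ≤ r ≤ b the map v^r : M^r → M^0 = L is injective and its image is exactly L^r = {x ∈ L : ϕ(x) ∈ p^r·L}. -/
universe u v

variable {R : Type u} [CommRing R] {p : ℕ}

/-- The direct sum of a finite family of gauges. -/
def gaugeDirectSum {ι : Type} [Fintype ι] (G : ι → GaugeData R p) : GaugeData R p where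
  M r := ∀ i, (G i).M r
  f r := LinearMap.pi fun i => (G i).f r ∘ₗ LinearMap.proj i
  v r := LinearMap.pi fun i => (G i).v r ∘ₗ LinearMap.proj i
  fv := by
    intro r x
    funext i
    simpa using (G i).fv r (x i)
  vf := by
    intro r x
    funext i
    simpa using (G i).vf r (x i)

/-- An isomorphism of gauges: a family of linear equivalences commuting with `f` and `v`. -/
def GaugeData.IsoTo (G G' : GaugeData R p) : Prop :=
  ∃ e : ∀ r : ℤ, G.M r ≃ₗ[R] G'.M r,
    (∀ (r : ℤ) (x : G.M r), e (r + 1) (G.f r x) = G'.f r (e r x)) ∧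
      (∀ (r : ℤ) (x : G.M (r + 1)), e r (G.v r x) = G'.v r (e (r + 1) x))

/-- The standard free gauge of degree `d` over the Witt vectors `W`: all components are `W`,
`f` is the identity in degrees `≥ d` and multiplication by `p` below, and `v : M^{r+1} → M^r`
is multiplication by `p` for `r ≥ d` and the identity for `r < d`. -/
noncomputable def stdFreeGaugeWitt (p : ℕ) [hp : Fact p.Prime] (k : Type) [Field k] [CharP k p]
    (d : ℤ) : GaugeData (WittVector p k) p where
  M _ := WittVector p k
  f r := if d ≤ r then LinearMap.id else (p : WittVector p k) • LinearMap.id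
  v r := if r + 1 ≤ d then LinearMap.id else (p : WittVector p k) • LinearMap.id
  fv := by
    intro r x
    try dsimp only
    split_ifs
    · exfalso; omega
    · simp
    · simp
    · exfalso; omega
  vf := by
    intro r x
    try dsimp only
    split_ifs
    · exfalso; omega
    · simp
    · simp
    · exfalso; omega

/-- A gauge over `W = W(k)` is free if it is isomorphic to a finite direct sum of standard
free gauges. -/
def GaugeData.IsFreeWitt {p : ℕ} [hp : Fact p.Prime] {k : Type} [Field k] [CharP k p]
    (G : GaugeData (WittVector p k) p) : Prop :=
  ∃ (n : ℕ) (d : Fin n → ℤ), G.IsoTo (gaugeDirectSum fun i => stdFreeGaugeWitt p k (d i))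


section Aux

@[simp] lemma GaugeData.cast_rfl (G : GaugeData R p) {r : ℤ} (x : G.M r) :
    G.cast rfl x = x := rfl

lemma iso_cast {G G' : GaugeData R p} (e : ∀ r : ℤ, G.M r ≃ₗ[R] G'.M r)
    {r s : ℤ} (h : r = s) (x : G.M r) :
    e s (G.cast h x) = G'.cast h (e r x) := by subst h; rfl

lemma iso_fpow {G G' : GaugeData R p} (e : ∀ r : ℤ, G.M r ≃ₗ[R] G'.M r)
    (hef : ∀ (r : ℤ) (x : G.M r), e (r + 1) (G.f r x) = G'.f r (e r x)) :
    ∀ (a : ℕ) (r : ℤ) (x : G.M r), e (r + a) (G.fpow a r x) = G'.fpow a r (e r x)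
  | 0, r, x => by
      simp only [GaugeData.fpow, LinearEquiv.coe_coe, iso_cast e]
  | a + 1, r, x => by
      simp only [GaugeData.fpow, LinearMap.comp_apply, LinearEquiv.coe_coe]
      rw [iso_cast e, iso_fpow e hef a (r+1), hef]

lemma iso_vpow {G G' : GaugeData R p} (e : ∀ r : ℤ, G.M r ≃ₗ[R] G'.M r)
    (hev : ∀ (r : ℤ) (x : G.M (r + 1)), e r (G.v r x) = G'.v r (e (r + 1) x)) :
    ∀ (c : ℕ) (r : ℤ) (x : G.M r), e (r - c) (G.vpow c r x) = G'.vpow c r (e r x)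
  | 0, r, x => by
      simp only [GaugeData.vpow, LinearEquiv.coe_coe, iso_cast e]
  | c + 1, r, x => by
      simp only [GaugeData.vpow, LinearMap.comp_apply, LinearEquiv.coe_coe]
      rw [iso_cast e, iso_vpow e hev c (r-1), hev, iso_cast e]

end Aux

section Std

variable (q : ℕ) [hq : Fact q.Prime] (k : Type) [Field k] [CharP k q]
  {n : ℕ} (d : Fin n → ℤ)

local notation "Wk" => WittVector q k
local notation "H" => gaugeDirectSum fun i => stdFreeGaugeWitt q k (d i)

/-- The `i`-th component of an element of the standard direct-sum gauge. -/
def gdsComp (r : ℤ) (x : (H).M r) (i : Fin n) : Wk := x i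

/-- Build an element of the standard direct-sum gauge from components. -/
def gdsMk (r : ℤ) (y : Fin n → Wk) : (H).M r := y

lemma gdsComp_mk (r : ℤ) (y : Fin n → Wk) (i : Fin n) :
    gdsComp q k d r (gdsMk q k d r y) i = y i := rfl

lemma gds_ext (r : ℤ) (x y : (H).M r)
    (h : ∀ i, gdsComp q k d r x i = gdsComp q k d r y i) : x = y := funext h

lemma gdsComp_smul (r : ℤ) (c : Wk) (x : (H).M r) (i : Fin n) :
    gdsComp q k d r (c • x) i = c * gdsComp q k d r x i := rfl

lemma std_cast_comp {r s : ℤ} (h : r = s) (x : (H).M r) (i : Fin n) :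
    gdsComp q k d s ((H).cast h x) i = gdsComp q k d r x i := by subst h; rfl

lemma std_f_comp (r : ℤ) (x : (H).M r) (i : Fin n) :
    gdsComp q k d (r + 1) ((H).f r x) i
      = if d i ≤ r then gdsComp q k d r x i else (q : Wk) * gdsComp q k d r x i := by
  show (stdFreeGaugeWitt q k (d i)).f r (x i) = _
  simp only [stdFreeGaugeWitt]
  split_ifs <;> rfl

lemma std_v_comp (r : ℤ) (x : (H).M (r + 1)) (i : Fin n) :
    gdsComp q k d r ((H).v r x) i
      = if r + 1 ≤ d i then gdsComp q k d (r + 1) x i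
        else (q : Wk) * gdsComp q k d (r + 1) x i := by
  show (stdFreeGaugeWitt q k (d i)).v r (x i) = _
  simp only [stdFreeGaugeWitt]
  split_ifs <;> rfl

lemma std_fpow_comp :
    ∀ (a : ℕ) (r : ℤ) (x : (H).M r) (i : Fin n),
      gdsComp q k d (r + a) ((H).fpow a r x) i
        = (q : Wk) ^ (min (d i) (r + a) - min (d i) r).toNat * gdsComp q k d r x i
  | 0, r, x, i => by
      simp only [GaugeData.fpow, LinearEquiv.coe_coe]
      rw [show ((H).cast (by simp : r = r + ((0:ℕ):ℤ)) x) = (H).cast (by simp) x from rfl]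
      rw [std_cast_comp]
      norm_num
  | a + 1, r, x, i => by
      simp only [GaugeData.fpow, LinearMap.comp_apply, LinearEquiv.coe_coe]
      rw [std_cast_comp, std_fpow_comp a (r+1), std_f_comp]
      split_ifs with h
      · rw [show (min (d i) (r + 1 + ↑a) - min (d i) (r + 1)).toNat
            = (min (d i) (r + ↑(a + 1)) - min (d i) r).toNat by push_cast; omega]
      · rw [← mul_assoc, ← pow_succ,
          show (min (d i) (r + 1 + ↑a) - min (d i) (r + 1)).toNat + 1
            = (min (d i) (r + ↑(a + 1)) - min (d i) r).toNat by push_cast; omega]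

lemma std_vpow_comp :
    ∀ (c : ℕ) (r : ℤ) (x : (H).M r) (i : Fin n),
      gdsComp q k d (r - c) ((H).vpow c r x) i
        = (q : Wk) ^ (r - max (r - c) (d i)).toNat * gdsComp q k d r x i
  | 0, r, x, i => by
      simp only [GaugeData.vpow, LinearEquiv.coe_coe]
      rw [std_cast_comp,
        show ((r:ℤ) - max (r - ((0:ℕ):ℤ)) (d i)).toNat = 0 by omega, pow_zero, one_mul]
  | c + 1, r, x, i => by
      simp only [GaugeData.vpow, LinearMap.comp_apply, LinearEquiv.coe_coe]
      rw [std_cast_comp, std_vpow_comp c (r-1), std_v_comp, std_cast_comp]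
      split_ifs with h
      · rw [show (r - 1 - max (r - 1 - ↑c) (d i)).toNat
            = (r - max (r - ↑(c + 1)) (d i)).toNat by push_cast; omega]
      · rw [← mul_assoc, ← pow_succ,
          show (r - 1 - max (r - 1 - ↑c) (d i)).toNat + 1
            = (r - max (r - ↑(c + 1)) (d i)).toNat by push_cast; omega]

lemma std_vpow_inj (c : ℕ) (r : ℤ) :
    Function.Injective ((H).vpow c r) := by
  intro x y hxy
  refine gds_ext q k d r x y fun i => ?_
  have h : gdsComp q k d (r - c) ((H).vpow c r x) i
      = gdsComp q k d (r - c) ((H).vpow c r y) i := by rw [hxy]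
  rw [std_vpow_comp, std_vpow_comp] at h
  exact mul_left_cancel₀ (pow_ne_zero _ ((WittVector.irreducible q).ne_zero)) h

end Std

/-- Let `(M, f, v, φ)` be a φ-gauge of finite type over `W(k)`, concentrated in `[0, b]`,
whose underlying gauge is free, and let `ϕ = φ ∘ f^b : L → L` on `L = M^0`.  Then for
`0 ≤ r ≤ b` the map `v^r : M^r → M^0 = L` is injective with image exactly
`L^r = {x ∈ L : ϕ(x) ∈ p^r·L}`. -/
theorem phiGauge_vpow_image (p : ℕ) [hp : Fact p.Prime] (k : Type) [Field k] [CharP k p]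
    [PerfectRing k p] (G : GaugeData (WittVector p k) p) (hft : G.IsFiniteType) (b : ℕ)
    (hconc : G.ConcentratedIn 0 (b : ℤ)) (hfree : G.IsFreeWitt)
    (φ : G.M (b : ℤ) → G.M 0) (hφadd : ∀ x y, φ (x + y) = φ x + φ y)
    (hφbij : Function.Bijective φ)
    (hφsemi : ∀ (c : WittVector p k) (x : G.M (b : ℤ)),
      φ (c • x) = (WittVector.frobeniusEquiv p k c) • φ x) :
    ∀ r : ℕ, r ≤ b →
      Function.Injective
        (fun x : G.M (r : ℤ) => G.cast (sub_self (r : ℤ)) (G.vpow r (r : ℤ) x)) ∧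
      ∀ x : G.M 0,
        (∃ z : G.M (r : ℤ), G.cast (sub_self (r : ℤ)) (G.vpow r (r : ℤ) z) = x) ↔
          ∃ y : G.M 0, φ (G.cast (zero_add ((b : ℕ) : ℤ)) (G.fpow b 0 x)) =
            (p : WittVector p k) ^ r • y := by
  classical
  obtain ⟨n, d, e, hef, hev⟩ := hfree
  have hpne : (p : WittVector p k) ≠ 0 := (WittVector.irreducible p).ne_zero
  have hpnu : ¬ IsUnit (p : WittVector p k) := (WittVector.irreducible p).not_isUnit
  -- concentration transported to H
  have hHv : ∀ rr : ℤ, rr + 1 ≤ 0 → Function.Surjective ((gaugeDirectSum fun i => stdFreeGaugeWitt p k (d i)).v rr) := by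
    intro rr hrr t
    obtain ⟨s, hs⟩ := (hconc.1 rr hrr).2 ((e rr).symm t)
    refine ⟨e (rr + 1) s, ?_⟩
    rw [← hev, hs, LinearEquiv.apply_symm_apply]
  have hHf : ∀ rr : ℤ, (b : ℤ) ≤ rr → Function.Surjective ((gaugeDirectSum fun i => stdFreeGaugeWitt p k (d i)).f rr) := by
    intro rr hrr t
    obtain ⟨s, hs⟩ := (hconc.2 rr hrr).2 ((e (rr + 1)).symm t)
    refine ⟨e rr s, ?_⟩
    rw [← hef, hs, LinearEquiv.apply_symm_apply]
  -- degree bounds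
  have hd0 : ∀ i, 0 ≤ d i := by
    intro i
    by_contra hdi
    push_neg at hdi
    obtain ⟨x, hx⟩ := hHv (-1) (by omega) (gdsMk p k d (-1) (Pi.single i 1))
    have h1 : gdsComp p k d (-1) ((gaugeDirectSum fun i => stdFreeGaugeWitt p k (d i)).v (-1) x) i = 1 := by
      rw [hx, gdsComp_mk, Pi.single_eq_same]
    rw [std_v_comp, if_neg (by omega)] at h1
    exact hpnu (IsUnit.of_mul_eq_one _ h1)
  have hdb : ∀ i, d i ≤ (b : ℤ) := by
    intro i
    by_contra hdi
    push_neg at hdi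
    obtain ⟨x, hx⟩ := hHf (b : ℤ) le_rfl (gdsMk p k d ((b : ℤ) + 1) (Pi.single i 1))
    have h1 : gdsComp p k d ((b : ℤ) + 1) ((gaugeDirectSum fun i => stdFreeGaugeWitt p k (d i)).f (b : ℤ) x) i = 1 := by
      rw [hx, gdsComp_mk, Pi.single_eq_same]
    rw [std_f_comp, if_neg (by omega)] at h1
    exact hpnu (IsUnit.of_mul_eq_one _ h1)
  intro r hr
  constructor
  · -- injectivity
    intro z1 z2 hz
    dsimp only at hz
    have h1 : G.vpow r (r : ℤ) z1 = G.vpow r (r : ℤ) z2 :=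
      (G.cast (sub_self (r : ℤ))).injective hz
    have h2 : (gaugeDirectSum fun i => stdFreeGaugeWitt p k (d i)).vpow r (r : ℤ) (e (r : ℤ) z1) = (gaugeDirectSum fun i => stdFreeGaugeWitt p k (d i)).vpow r (r : ℤ) (e (r : ℤ) z2) := by
      rw [← iso_vpow e hev, ← iso_vpow e hev, h1]
    exact (e (r : ℤ)).injective (std_vpow_inj p k d r (r : ℤ) h2)
  · intro x
    have keyφ : (∃ y : G.M 0, φ (G.cast (zero_add ((b : ℕ) : ℤ)) (G.fpow b 0 x)) =
          (p : WittVector p k) ^ r • y) ↔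
        ∃ u : G.M ((b : ℕ) : ℤ), G.cast (zero_add ((b : ℕ) : ℤ)) (G.fpow b 0 x) =
          (p : WittVector p k) ^ r • u := by
      have hfrob : ∀ u : G.M ((b : ℕ) : ℤ),
          φ ((p : WittVector p k) ^ r • u) = (p : WittVector p k) ^ r • φ u := by
        intro u
        rw [hφsemi]
        congr 1
        rw [map_pow, map_natCast]
      constructor
      · rintro ⟨y, hy⟩
        obtain ⟨u₀, hu₀⟩ := hφbij.2 y
        exact ⟨u₀, hφbij.1 (by rw [hy, ← hu₀, hfrob])⟩
      · rintro ⟨u, hu⟩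
        exact ⟨φ u, by rw [hu, hfrob]⟩
    rw [keyφ]
    constructor
    · -- from image of v^r to divisibility
      rintro ⟨z, hz⟩
      have hx0 : ∀ i, gdsComp p k d 0 (e 0 x) i
          = (p : WittVector p k) ^ (((r : ℕ) : ℤ) - max (((r : ℕ) : ℤ) - ((r : ℕ) : ℤ)) (d i)).toNat
            * gdsComp p k d ((r : ℕ) : ℤ) (e ((r : ℕ) : ℤ) z) i := by
        intro i
        rw [← hz, iso_cast e, iso_vpow e hev, std_cast_comp, std_vpow_comp]
      refine ⟨(e ((b : ℕ) : ℤ)).symm (gdsMk p k d ((b : ℕ) : ℤ)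
        (fun i => (p : WittVector p k) ^ (d i - (r : ℕ)).toNat
          * gdsComp p k d ((r : ℕ) : ℤ) (e ((r : ℕ) : ℤ) z) i)), ?_⟩
      apply (e ((b : ℕ) : ℤ)).injective
      rw [iso_cast e, iso_fpow e hef, map_smul, LinearEquiv.apply_symm_apply]
      refine gds_ext p k d ((b : ℕ) : ℤ) _ _ fun i => ?_
      rw [std_cast_comp, std_fpow_comp, gdsComp_smul, gdsComp_mk, hx0 i,
        ← mul_assoc, ← mul_assoc, ← pow_add, ← pow_add]
      congr 2
      have h0 := hd0 i
      have hb := hdb i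
      omega
    · -- from divisibility to image of v^r
      rintro ⟨u, hu⟩
      have hu' : (gaugeDirectSum fun i => stdFreeGaugeWitt p k (d i)).cast (zero_add ((b : ℕ) : ℤ)) ((gaugeDirectSum fun i => stdFreeGaugeWitt p k (d i)).fpow b 0 (e 0 x))
          = (p : WittVector p k) ^ r • e ((b : ℕ) : ℤ) u := by
        have h := congrArg (e ((b : ℕ) : ℤ)) hu
        rw [iso_cast e, iso_fpow e hef, map_smul] at h
        exact h
      have hcomp : ∀ i, (p : WittVector p k) ^ (min (d i) ((0 : ℤ) + (b : ℕ)) - min (d i) 0).toNat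
          * gdsComp p k d 0 (e 0 x) i
          = (p : WittVector p k) ^ r * gdsComp p k d ((b : ℕ) : ℤ) (e ((b : ℕ) : ℤ) u) i := by
        intro i
        have h2 := congrArg (fun w => gdsComp p k d ((b : ℕ) : ℤ) w i) hu'
        simpa only [std_cast_comp, std_fpow_comp, gdsComp_smul] using h2
      refine ⟨(e ((r : ℕ) : ℤ)).symm (gdsMk p k d ((r : ℕ) : ℤ)
        (fun i => if ((r : ℕ) : ℤ) ≤ d i then gdsComp p k d 0 (e 0 x) i
          else gdsComp p k d ((b : ℕ) : ℤ) (e ((b : ℕ) : ℤ) u) i)), ?_⟩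
      apply (e 0).injective
      rw [iso_cast e, iso_vpow e hev, LinearEquiv.apply_symm_apply]
      refine gds_ext p k d 0 _ _ fun i => ?_
      rw [std_cast_comp, std_vpow_comp, gdsComp_mk]
      split_ifs with hcase
      · rw [show (((r : ℕ) : ℤ) - max (((r : ℕ) : ℤ) - ((r : ℕ) : ℤ)) (d i)).toNat = 0 by
          have := hd0 i; omega, pow_zero, one_mul]
      · have h := hcomp i
        rw [show (min (d i) ((0 : ℤ) + (b : ℕ)) - min (d i) 0).toNat = (d i).toNat by
          have := hd0 i; have := hdb i; omega] at h
        rw [show r = (d i).toNat +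
            (((r : ℕ) : ℤ) - max (((r : ℕ) : ℤ) - ((r : ℕ) : ℤ)) (d i)).toNat by
          have := hd0 i; omega, pow_add, mul_assoc] at h
        exact (mul_left_cancel₀ (pow_ne_zero _ hpne) h).symm
end

section
/- Let k be a perfect field of characteristic p > 0 and W = W(k). Let M be a gauge of finite type over W whose components are finitely generated free W-modules and which is concentrated in an interval [a, a+1] of length 1 (in particular, any such gauge concentrated in a single point [a,a]). Then M is a free W-gauge. -/
universe u v

variable {R : Type u} [CommRing R] {p : ℕ}

/-! ### Auxiliary lemmas for the proof -/

section SmithPair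

theorem smith_pair {R : Type u} [CommRing R] [IsDomain R] [IsPrincipalIdealRing R]
    {N0 N1 : Type v} [AddCommGroup N0] [AddCommGroup N1] [Module R N0] [Module R N1]
    [Module.Finite R N1] [Module.Free R N1]
    (π : R) (hπ : Irreducible π)
    (f : N0 →ₗ[R] N1) (v : N1 →ₗ[R] N0)
    (hfv : ∀ y, f (v y) = π • y) (hvf : ∀ x, v (f x) = π • x)
    (hinj : Function.Injective f) :
    ∃ (n : ℕ) (b0 : Module.Basis (Fin n) R N0) (b1 : Module.Basis (Fin n) R N1) (ε ε' : Fin n → R),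
      (∀ i, (ε i = 1 ∧ ε' i = π) ∨ (ε i = π ∧ ε' i = 1)) ∧
        (∀ i, f (b0 i) = ε i • b1 i) ∧ (∀ i, v (b1 i) = ε' i • b0 i) := by
  classical
  obtain ⟨n, o, hno, bO, bN, aa, hsnf⟩ :=
    Submodule.exists_smith_normal_form_of_le (Module.Free.chooseBasis R N1)
      (LinearMap.range f) ⊤ le_top
  set bT : Module.Basis (Fin o) R N1 := bO.map (Submodule.topEquiv) with hbT
  have hbTcoe : ∀ j, (↑(bO j) : N1) = bT j := fun j => rfl
  set c : Fin o → Fin n → R :=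
    fun j i' => bN.repr ⟨f (v (bT j)), LinearMap.mem_range_self f _⟩ i' with hc
  have key : ∀ j : Fin o,
      π • bT j = ∑ i' : Fin n, (c j i' * aa i') • bT (Fin.castLE hno i') := by
    intro j
    set z : LinearMap.range f := ⟨f (v (bT j)), LinearMap.mem_range_self f _⟩ with hz
    have hz2 : (z : N1) = π • bT j := hfv (bT j)
    have hz3 : (z : N1) = ∑ i', bN.repr z i' • ((bN i' : N1)) := by
      conv_lhs => rw [← bN.sum_repr z]
      push_cast
      rfl
    simp only [hsnf, hbTcoe, smul_smul] at hz3
    rw [← hz2]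
    exact hz3
  have keyr : ∀ j i : Fin o,
      π * (if j = i then 1 else 0) =
        ∑ i' : Fin n, (if Fin.castLE hno i' = i then c j i' * aa i' else 0) := by
    intro j i
    have := congrArg (fun w => bT.repr w i) (key j)
    simpa only [map_smul, map_sum, Module.Basis.repr_self, Finsupp.smul_apply,
      Finsupp.coe_finset_sum, Finset.sum_apply, Finsupp.single_apply, smul_eq_mul,
      mul_ite, mul_one, mul_zero] using this
  have hno' : n = o := by
    by_contra hne
    have hlt : n < o := lt_of_le_of_ne hno hne
    have := keyr ⟨n, hlt⟩ ⟨n, hlt⟩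
    rw [if_pos rfl, mul_one, Finset.sum_eq_zero] at this
    · exact hπ.ne_zero this
    · intro i' _
      rw [if_neg]
      intro h
      have : (i' : ℕ) = n := congrArg Fin.val h
      omega
  subst hno'
  have hcast : ∀ i' : Fin n, Fin.castLE hno i' = i' := fun i' => Fin.ext rfl
  have hdvd : ∀ j : Fin n, π = c j j * aa j := by
    intro j
    have := keyr j j
    rw [if_pos rfl, mul_one] at this
    rw [this, Finset.sum_eq_single j]
    · rw [hcast, if_pos rfl]
    · intro i' _ hne
      rw [hcast, if_neg hne]
    · intro h; exact absurd (Finset.mem_univ j) h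
  -- for each j, aa j = ε j * (unit)
  have hchoice : ∀ j : Fin n, ∃ (εj ε'j : R) (u : Rˣ),
      ((εj = 1 ∧ ε'j = π) ∨ (εj = π ∧ ε'j = 1)) ∧ aa j = εj * u ∧ εj * ε'j = π := by
    intro j
    rcases hπ.isUnit_or_isUnit (mul_comm (c j j) (aa j) ▸ hdvd j) with hu | hu
    · obtain ⟨w, hw⟩ := hu
      exact ⟨1, π, w, Or.inl ⟨rfl, rfl⟩, by rw [hw, one_mul], one_mul π⟩
    · obtain ⟨w, hw⟩ := hu
      refine ⟨π, 1, w⁻¹, Or.inr ⟨rfl, rfl⟩, ?_, mul_one π⟩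
      have h2 : π = aa j * (c j j) := (hdvd j).trans (mul_comm _ _)
      rw [h2, ← hw, mul_assoc, Units.mul_inv, mul_one]
  choose ε ε' u hor hau hεε' using hchoice
  -- bases
  set b1 : Module.Basis (Fin n) R N1 := bT.unitsSMul u with hb1
  set e0 : N0 ≃ₗ[R] LinearMap.range f := LinearEquiv.ofInjective f hinj with he0
  set b0 : Module.Basis (Fin n) R N0 := bN.map e0.symm with hb0
  have hf0 : ∀ i, f (b0 i) = ε i • b1 i := by
    intro i
    have h1 : f (b0 i) = ((bN i : N1)) := by
      have : e0 (b0 i) = bN i := by simp [hb0]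
      rw [← this]
      rfl
    rw [h1, hsnf, hcast, hbTcoe, hau i]
    rw [hb1, Module.Basis.unitsSMul_apply, Units.smul_def, smul_smul]
  refine ⟨n, b0, b1, ε, ε', hor, hf0, ?_⟩
  intro i
  apply hinj
  rw [hfv, map_smul, hf0 i, smul_smul, mul_comm (ε' i), hεε']

end SmithPair

section EAuxSection

-- test cast lemmas
lemma GaugeData.cast_rfl_apply (G : GaugeData R p) {r : ℤ} (h : r = r) (x : G.M r) :
    G.cast h x = x := rfl

lemma GaugeData.cast_cast_apply (G : GaugeData R p) {r s t : ℤ} (h : r = s) (h' : s = t)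
    (x : G.M r) : G.cast h' (G.cast h x) = G.cast (h.trans h') x := by subst h h'; rfl

section EAux

variable (G : GaugeData R p) (a : ℤ) {n : ℕ}

noncomputable def gaugeEUp (hf : ∀ r : ℤ, a + 1 ≤ r → Function.Bijective (G.f r))
    (E1 : G.M (a + 1) ≃ₗ[R] (Fin n → R)) : (m : ℕ) → (G.M (a + 1 + m) ≃ₗ[R] (Fin n → R))
  | 0 => (G.cast (by simp)).trans E1
  | (m + 1) =>
      ((G.cast (show a + 1 + ((m + 1 : ℕ) : ℤ) = a + 1 + (m : ℕ) + 1 by push_cast; ring)).trans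
        (LinearEquiv.ofBijective (G.f (a + 1 + (m : ℕ))) (hf _ (by omega))).symm).trans
        (gaugeEUp hf E1 m)

noncomputable def gaugeEDown (hv : ∀ r : ℤ, r + 1 ≤ a → Function.Bijective (G.v r))
    (E0 : G.M a ≃ₗ[R] (Fin n → R)) : (m : ℕ) → (G.M (a - m) ≃ₗ[R] (Fin n → R))
  | 0 => (G.cast (by simp)).trans E0
  | (m + 1) =>
      ((G.cast (show a - ((m + 1 : ℕ) : ℤ) = a - (m : ℕ) - 1 by push_cast; ring)).trans
        (((LinearEquiv.ofBijective (G.v (a - (m : ℕ) - 1)) (hv _ (by omega))).symm).trans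
          (G.cast (show a - (m : ℕ) - 1 + 1 = a - (m : ℕ) by ring)))).trans
        (gaugeEDown hv E0 m)

variable (hf : ∀ r : ℤ, a + 1 ≤ r → Function.Bijective (G.f r))
  (hv : ∀ r : ℤ, r + 1 ≤ a → Function.Bijective (G.v r))
  (E0 : G.M a ≃ₗ[R] (Fin n → R)) (E1 : G.M (a + 1) ≃ₗ[R] (Fin n → R))

noncomputable def gaugeEUp' (r : ℤ) (m : ℕ) (h : r = a + 1 + (m : ℤ)) :
    G.M r ≃ₗ[R] (Fin n → R) :=
  (G.cast h).trans (gaugeEUp G a hf E1 m)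

noncomputable def gaugeEDown' (r : ℤ) (m : ℕ) (h : r = a - (m : ℤ)) :
    G.M r ≃ₗ[R] (Fin n → R) :=
  (G.cast h).trans (gaugeEDown G a hv E0 m)

lemma gaugeEUp'_eq (r : ℤ) (m : ℕ) (h : r = a + 1 + (m : ℤ)) (m' : ℕ)
    (h' : r = a + 1 + (m' : ℤ)) : gaugeEUp' G a hf E1 r m h = gaugeEUp' G a hf E1 r m' h' := by
  have hm : m = m' := by omega
  subst hm; rfl

lemma gaugeEDown'_eq (r : ℤ) (m : ℕ) (h : r = a - (m : ℤ)) (m' : ℕ)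
    (h' : r = a - (m' : ℤ)) : gaugeEDown' G a hv E0 r m h = gaugeEDown' G a hv E0 r m' h' := by
  have hm : m = m' := by omega
  subst hm; rfl

noncomputable def gaugeE (r : ℤ) : G.M r ≃ₗ[R] (Fin n → R) :=
  if h : a + 1 ≤ r then gaugeEUp' G a hf E1 r (r - (a + 1)).toNat (by omega)
  else gaugeEDown' G a hv E0 r (a - r).toNat (by omega)

lemma gaugeE_hi (x : G.M (a + 1)) : gaugeE G a hf hv E0 E1 (a + 1) x = E1 x := by
  rw [gaugeE, dif_pos (le_refl (a + 1)),
    gaugeEUp'_eq G a hf E1 _ _ _ 0 (by simp)]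
  simp only [gaugeEUp', gaugeEUp, LinearEquiv.trans_apply, GaugeData.cast_cast_apply,
    GaugeData.cast_rfl_apply]

lemma gaugeE_lo (x : G.M a) : gaugeE G a hf hv E0 E1 a x = E0 x := by
  rw [gaugeE, dif_neg (by omega), gaugeEDown'_eq G a hv E0 _ _ _ 0 (by simp)]
  simp only [gaugeEDown', gaugeEDown, LinearEquiv.trans_apply, GaugeData.cast_cast_apply,
    GaugeData.cast_rfl_apply]

lemma gaugeE_f_high (r : ℤ) (hr : a + 1 ≤ r) (x : G.M r) :
    gaugeE G a hf hv E0 E1 (r + 1) (G.f r x) = gaugeE G a hf hv E0 E1 r x := by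
  obtain ⟨m, rfl⟩ : ∃ m : ℕ, r = a + 1 + (m : ℤ) := ⟨(r - (a + 1)).toNat, by omega⟩
  rw [gaugeE, gaugeE, dif_pos (by omega : a + 1 ≤ a + 1 + (m : ℤ) + 1),
    dif_pos (by omega : a + 1 ≤ a + 1 + (m : ℤ)),
    gaugeEUp'_eq G a hf E1 (a + 1 + (m : ℤ) + 1) ((a + 1 + (m : ℤ) + 1 - (a + 1)).toNat)
      (by omega) (m + 1) (by omega),
    gaugeEUp'_eq G a hf E1 (a + 1 + (m : ℤ)) ((a + 1 + (m : ℤ) - (a + 1)).toNat)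
      (by omega) m (by omega)]
  simp only [gaugeEUp', gaugeEUp, LinearEquiv.trans_apply, GaugeData.cast_cast_apply,
    GaugeData.cast_rfl_apply]
  congr 1
  exact (LinearEquiv.symm_apply_eq _).2 rfl

lemma gaugeE_v_low (r : ℤ) (hr : r + 1 ≤ a) (x : G.M (r + 1)) :
    gaugeE G a hf hv E0 E1 r (G.v r x) = gaugeE G a hf hv E0 E1 (r + 1) x := by
  obtain ⟨m, rfl⟩ : ∃ m : ℕ, r = a - (m : ℤ) - 1 := ⟨(a - (r + 1)).toNat, by omega⟩
  rw [gaugeE, gaugeE, dif_neg (by omega), dif_neg (by omega),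
    gaugeEDown'_eq G a hv E0 (a - (m : ℤ) - 1) ((a - (a - (m : ℤ) - 1)).toNat)
      (by omega) (m + 1) (by omega),
    gaugeEDown'_eq G a hv E0 (a - (m : ℤ) - 1 + 1) ((a - (a - (m : ℤ) - 1 + 1)).toNat)
      (by omega) m (by omega)]
  simp only [gaugeEDown', gaugeEDown, LinearEquiv.trans_apply, GaugeData.cast_cast_apply,
    GaugeData.cast_rfl_apply]
  congr 1
  have h1 : (LinearEquiv.ofBijective (G.v (a - (m : ℕ) - 1)) (hv _ (by omega))).symm
      (G.v (a - (m : ℕ) - 1) x) = x := (LinearEquiv.symm_apply_eq _).2 rfl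
  rw [h1]

end EAux

end EAuxSection

/-- A gauge of finite type over `W(k)` with finitely generated free components which is
concentrated in an interval `[a, a+1]` of length one is a free `W`-gauge. -/
theorem gauge_concentrated_length_one_is_free (p : ℕ) [hp : Fact p.Prime] (k : Type)
    [Field k] [CharP k p] [PerfectRing k p] (G : GaugeData (WittVector p k) p)
    (hft : G.IsFiniteType)
    (hfree : ∀ r : ℤ, Module.Finite (WittVector p k) (G.M r) ∧
      Module.Free (WittVector p k) (G.M r))
    (a : ℤ) (hconc : G.ConcentratedIn a (a + 1)) : G.IsFreeWitt := by
  classical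
  haveI : IsDiscreteValuationRing (WittVector p k) := WittVector.isDiscreteValuationRing
  haveI h0fin := (hfree a).1
  haveI h0free := (hfree a).2
  haveI h1fin := (hfree (a + 1)).1
  haveI h1free := (hfree (a + 1)).2
  have hπ : Irreducible ((p : ℕ) : WittVector p k) := WittVector.irreducible p
  obtain ⟨hv, hf⟩ := hconc
  have hinj : Function.Injective (G.f a) := by
    intro x y hxy
    have h2 : ((p : ℕ) : WittVector p k) • x = ((p : ℕ) : WittVector p k) • y := by
      rw [← G.vf a x, ← G.vf a y, hxy]
    exact smul_right_injective _ hπ.ne_zero h2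
  obtain ⟨n, b0, b1, ε, ε', hor, hfb, hvb⟩ :=
    smith_pair ((p : ℕ) : WittVector p k) hπ (G.f a) (G.v a) (G.fv a) (G.vf a) hinj
  set d : Fin n → ℤ := fun i => if ε i = 1 then a else a + 1 with hd
  have hda : ∀ i, d i = a ∨ d i = a + 1 := by
    intro i; by_cases h : ε i = 1 <;> simp [hd, h]
  set E0 := b0.equivFun with hE0
  set E1 := b1.equivFun with hE1
  have hcoordf : ∀ (x : G.M a) (i : Fin n), E1 (G.f a x) i = E0 x i * ε i := by
    intro x i
    have hx : G.f a x = ∑ j, (E0 x j * ε j) • b1 j := by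
      conv_lhs => rw [← b0.sum_equivFun x]
      rw [map_sum]
      refine Finset.sum_congr rfl fun j _ => ?_
      rw [map_smul, hfb, smul_smul, hE0]
    rw [hx, hE1, Module.Basis.equivFun_apply, Module.Basis.repr_sum_self]
  have hcoordv : ∀ (y : G.M (a + 1)) (i : Fin n), E0 (G.v a y) i = E1 y i * ε' i := by
    intro y i
    have hy : G.v a y = ∑ j, (E1 y j * ε' j) • b0 j := by
      conv_lhs => rw [← b1.sum_equivFun y]
      rw [map_sum]
      refine Finset.sum_congr rfl fun j _ => ?_
      rw [map_smul, hvb, smul_smul, hE1]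
    rw [hy, hE0, Module.Basis.equivFun_apply, Module.Basis.repr_sum_self]
  refine ⟨n, d, fun r => gaugeE G a hf hv E0 E1 r, ?_, ?_⟩
  · -- compatibility with f
    have hstdf : ∀ (r : ℤ) (y : Fin n → WittVector p k)
        (i : Fin n), (gaugeDirectSum fun i => stdFreeGaugeWitt p k (d i)).f r y i
          = if d i ≤ r then y i else ((p : ℕ) : WittVector p k) * y i := by
      intro r y i
      show (if d i ≤ r then LinearMap.id else ((p : ℕ) : WittVector p k) • LinearMap.id)
        (y i) = _
      split_ifs <;> rfl
    intro r x
    show (gaugeE G a hf hv E0 E1 (r + 1)) (G.f r x) =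
      (gaugeDirectSum fun i => stdFreeGaugeWitt p k (d i)).f r
        ((gaugeE G a hf hv E0 E1 r) x)
    rcases lt_trichotomy r a with hcase | hcase | hcase
    · -- r < a
      have hr : r + 1 ≤ a := by omega
      set vE := LinearEquiv.ofBijective (G.v r) (hv r hr) with hvE
      have h1 : G.f r x = ((p : ℕ) : WittVector p k) • vE.symm x := by
        apply vE.injective
        rw [map_smul, vE.apply_symm_apply]
        exact G.vf r x
      have h3 : G.v r (vE.symm x) = x := vE.apply_symm_apply x
      have h4 := gaugeE_v_low G a hf hv E0 E1 r hr (vE.symm x)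
      rw [h3] at h4
      rw [h1, map_smul, ← h4]
      funext i
      rw [hstdf, if_neg (by rcases hda i with h | h <;> omega)]
      simp [mul_comm]
    · -- r = a
      subst hcase
      rw [gaugeE_hi G r hf hv E0 E1 (G.f r x), gaugeE_lo G r hf hv E0 E1 x]
      funext i
      rw [hstdf, hcoordf x i]
      rcases hor i with ⟨h1, _⟩ | ⟨h1, _⟩
      · rw [if_pos (by simp [hd, h1]), h1, mul_one]
      · rw [if_neg (by simp [hd, h1, hπ.ne_one]), h1, mul_comm]
    · -- r > a
      have hr : a + 1 ≤ r := by omega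
      rw [gaugeE_f_high G a hf hv E0 E1 r hr x]
      funext i
      rw [hstdf, if_pos (by rcases hda i with h | h <;> omega)]
  · -- compatibility with v
    have hstdv : ∀ (r : ℤ) (y : Fin n → WittVector p k)
        (i : Fin n), (gaugeDirectSum fun i => stdFreeGaugeWitt p k (d i)).v r y i
          = if r + 1 ≤ d i then y i else ((p : ℕ) : WittVector p k) * y i := by
      intro r y i
      show (if r + 1 ≤ d i then LinearMap.id else ((p : ℕ) : WittVector p k) • LinearMap.id)
        (y i) = _
      split_ifs <;> rfl
    intro r x
    show (gaugeE G a hf hv E0 E1 r) (G.v r x) =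
      (gaugeDirectSum fun i => stdFreeGaugeWitt p k (d i)).v r
        ((gaugeE G a hf hv E0 E1 (r + 1)) x)
    rcases lt_trichotomy r a with hcase | hcase | hcase
    · -- r < a
      have hr : r + 1 ≤ a := by omega
      rw [gaugeE_v_low G a hf hv E0 E1 r hr x]
      funext i
      rw [hstdv, if_pos (by rcases hda i with h | h <;> omega)]
    · -- r = a
      subst hcase
      rw [gaugeE_lo G r hf hv E0 E1 (G.v r x), gaugeE_hi G r hf hv E0 E1 x]
      funext i
      rw [hstdv, hcoordv x i]
      rcases hor i with ⟨h1, h2⟩ | ⟨h1, h2⟩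
      · have hdi : d i = r := by simp [hd, h1]
        rw [if_neg (by omega), h2, mul_comm]
      · have hdi : d i = r + 1 := by simp [hd, h1, hπ.ne_one]
        rw [if_pos (by omega), h2, mul_one]
    · -- r > a
      have hr : a + 1 ≤ r := by omega
      set fE := LinearEquiv.ofBijective (G.f r) (hf r hr) with hfE
      have h1 : G.v r x = ((p : ℕ) : WittVector p k) • fE.symm x := by
        apply fE.injective
        rw [map_smul, fE.apply_symm_apply]
        exact G.fv r x
      have h5 : G.f r (fE.symm x) = x := fE.apply_symm_apply x
      have h4 := gaugeE_f_high G a hf hv E0 E1 r hr (fE.symm x)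
      rw [h5] at h4
      rw [h1, map_smul, ← h4]
      funext i
      rw [hstdv, if_neg (by rcases hda i with h | h <;> omega)]
      simp [mul_comm]
end

section
/- Let A be a commutative noetherian ring of characteristic p, where p is a prime, and let φ : A → A be the Frobenius endomorphism a ↦ a^p. Then the subring A_per = ⋂_{n ≥ 0} φ^n(A) (the intersection of the images of all iterates of φ) is a perfect ring: every element of A_per is the p-th power of an element of A_per, and any element a of A_per with a^p = 0 satisfies a = 0; equivalently, the restriction of φ to A_per is a bijection of A_per onto itself. -/
/-- For a commutative noetherian ring `A` of characteristic `p`, the subring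
`A_per = ⋂ₙ φⁿ(A)` (where `φ : a ↦ a^p` is the Frobenius) is perfect: every element of
`A_per` is a `p`-th power of an element of `A_per`, any `a ∈ A_per` with `a^p = 0` is zero,
and the Frobenius restricts to a bijection of `A_per` onto itself. -/
theorem perfection_subring_is_perfect (p : ℕ) (hp : p.Prime) (A : Type*)
    [CommRing A] [IsNoetherianRing A] [CharP A p] :
    (∀ x ∈ ⋂ n : ℕ, Set.range ((fun a : A => a ^ p)^[n]),
        ∃ y ∈ ⋂ n : ℕ, Set.range ((fun a : A => a ^ p)^[n]), y ^ p = x) ∧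
      (∀ a ∈ ⋂ n : ℕ, Set.range ((fun a : A => a ^ p)^[n]), a ^ p = 0 → a = 0) ∧
      Set.BijOn (fun a : A => a ^ p)
        (⋂ n : ℕ, Set.range ((fun a : A => a ^ p)^[n]))
        (⋂ n : ℕ, Set.range ((fun a : A => a ^ p)^[n])) := by
  haveI : Fact p.Prime := ⟨hp⟩
  haveI : ExpChar A p := ExpChar.prime hp
  -- iterates of Frobenius
  have hiter : ∀ (n : ℕ) (a : A), (fun a : A => a ^ p)^[n] a = a ^ p ^ n := by
    intro n
    induction n with
    | zero => intro a; simp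
    | succ n ih =>
      intro a
      rw [Function.iterate_succ_apply', ih, ← pow_mul, ← pow_succ]
  have hmem : ∀ x : A,
      (x ∈ ⋂ n : ℕ, Set.range ((fun a : A => a ^ p)^[n])) ↔
        ∀ n : ℕ, ∃ a : A, a ^ p ^ n = x := by
    intro x
    simp only [Set.mem_iInter, Set.mem_range, hiter]
  -- kernel stabilization via noetherianity
  have hker_mono : Monotone (fun n => RingHom.ker (iterateFrobenius A p n)) := by
    intro n m hnm a ha
    simp only [RingHom.mem_ker, iterateFrobenius_def] at ha ⊢
    have h : p ^ m = p ^ n * p ^ (m - n) := by rw [← pow_add]; congr 1; omega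
    rw [h, pow_mul, ha, zero_pow (pow_ne_zero _ hp.ne_zero)]
  obtain ⟨N, hN⟩ := monotone_stabilizes_iff_noetherian.mpr
    (inferInstance : IsNoetherian A A)
    ⟨fun n => RingHom.ker (iterateFrobenius A p n), hker_mono⟩
  have hstab : ∀ m, N ≤ m → ∀ a : A, a ^ p ^ (m + 1) = 0 → a ^ p ^ m = 0 := by
    intro m hm a ha
    have h1 : RingHom.ker (iterateFrobenius A p m)
        = RingHom.ker (iterateFrobenius A p (m + 1)) :=
      (hN m hm).symm.trans (hN (m + 1) (by omega))
    have : a ∈ RingHom.ker (iterateFrobenius A p (m + 1)) := by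
      simpa only [RingHom.mem_ker, iterateFrobenius_def] using ha
    rw [← h1] at this
    simpa only [RingHom.mem_ker, iterateFrobenius_def] using this
  -- injectivity statement
  have hinj : ∀ a ∈ ⋂ n : ℕ, Set.range ((fun a : A => a ^ p)^[n]), a ^ p = 0 → a = 0 := by
    intro a ha hap
    rw [hmem] at ha
    obtain ⟨b, hb⟩ := ha N
    have hb1 : b ^ p ^ (N + 1) = 0 := by
      rw [pow_succ, pow_mul, hb, hap]
    have := hstab N le_rfl b hb1
    rw [hb] at this
    exact this
  -- surjectivity statement
  have hsurj : ∀ x ∈ ⋂ n : ℕ, Set.range ((fun a : A => a ^ p)^[n]),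
      ∃ y ∈ ⋂ n : ℕ, Set.range ((fun a : A => a ^ p)^[n]), y ^ p = x := by
    intro x hx
    rw [hmem] at hx
    choose a ha using fun n => hx (n + 1)
    -- the values (a m)^(p^m) agree for m ≥ N
    have key : ∀ m, N ≤ m → a m ^ p ^ m = a N ^ p ^ N := by
      intro m hm
      induction m with
      | zero =>
        have hN0 : N = 0 := by omega
        subst hN0; rfl
      | succ m ih =>
        rcases Nat.lt_or_ge m N with h | h
        · have : m + 1 = N := by omega
          subst this; rfl
        · have step : a m ^ p ^ m = a (m + 1) ^ p ^ (m + 1) := by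
            have hc : (a m - a (m + 1) ^ p) ^ p ^ (m + 1) = 0 := by
              rw [sub_pow_char_pow, ha m, ← pow_mul, ← pow_succ', ha (m + 1), sub_self]
            have hc0 := hstab m h _ hc
            rw [sub_pow_char_pow, sub_eq_zero] at hc0
            rw [hc0, ← pow_mul, ← pow_succ']
          rw [← step]
          exact ih h
    refine ⟨a N ^ p ^ N, ?_, ?_⟩
    · rw [hmem]
      intro n
      set m := max n N with hmdef
      refine ⟨a m ^ p ^ (m - n), ?_⟩
      rw [← pow_mul, ← pow_add]
      have h1 : m - n + n = m := by omega
      rw [h1, key m (le_max_right n N)]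
    · rw [← pow_mul, ← pow_succ, ha N]
  refine ⟨hsurj, hinj, ?_, ?_, ?_⟩
  · -- MapsTo
    intro x hx
    rw [hmem] at hx ⊢
    intro n
    obtain ⟨b, hb⟩ := hx n
    exact ⟨b ^ p, by rw [← hb, ← pow_mul, mul_comm, pow_mul]⟩
  · -- InjOn
    intro x hx y hy hxy
    have hsub : x - y ∈ ⋂ n : ℕ, Set.range ((fun a : A => a ^ p)^[n]) := by
      rw [hmem] at hx hy ⊢
      intro n
      obtain ⟨u, hu⟩ := hx n
      obtain ⟨v, hv⟩ := hy n
      exact ⟨u - v, by rw [sub_pow_char_pow, hu, hv]⟩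
    have hxy' : x ^ p = y ^ p := hxy
    have h0 : x - y = 0 := hinj _ hsub (by rw [sub_pow_char, hxy', sub_self])
    exact sub_eq_zero.mp h0
  · -- SurjOn
    intro x hx
    obtain ⟨y, hy, hyx⟩ := hsurj x hx
    exact ⟨y, hy, hyx⟩
end

section
/- Let k be a perfect field of characteristic p > 0, W = W(k), and σ : W → W the Witt-vector Frobenius. The assignment sending a finite-type φ-gauge (M^{−1}, M^0, f, v, φ) concentrated in [−1,0] to the Dieudonné module (M^{−1}, F, V) with F = φ∘f and V = v∘φ^{−1} defines an equivalence of categories from the category of finite-type φ-gauges over W concentrated in [−1,0] to the category of Dieudonné modules of finite type over k: it is fully faithful (a W-linear map h : M^{−1} → N^{−1} commutes with F and V if and only if it arises from a unique morphism of φ-gauges) and essentially surjective (every Dieudonné module of finite type over k is isomorphic to one arising this way). -/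
/-- A finite-type φ-gauge over `W(k)` concentrated in `[-1, 0]`: finitely generated
`W(k)`-modules `M⁻¹`, `M⁰` with `f : M⁻¹ → M⁰`, `v : M⁰ → M⁻¹` satisfying
`f∘v = v∘f = p·id`, and a bijective additive Frobenius-semilinear map `φ : M⁰ → M⁻¹`. -/
structure PhiGaugeInterval (p : ℕ) [Fact p.Prime] (k : Type) [Field k] [CharP k p]
    [PerfectRing k p] where
  Mneg : Type
  Mzero : Type
  [acgN : AddCommGroup Mneg]
  [modN : Module (WittVector p k) Mneg]
  [acgZ : AddCommGroup Mzero]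
  [modZ : Module (WittVector p k) Mzero]
  [finN : Module.Finite (WittVector p k) Mneg]
  [finZ : Module.Finite (WittVector p k) Mzero]
  f : Mneg →ₗ[WittVector p k] Mzero
  v : Mzero →ₗ[WittVector p k] Mneg
  fv : ∀ x, f (v x) = (p : WittVector p k) • x
  vf : ∀ x, v (f x) = (p : WittVector p k) • x
  phi : Mzero ≃+ Mneg
  phi_semi : ∀ (c : WittVector p k) (x : Mzero),
    phi (c • x) = (WittVector.frobeniusEquiv p k c) • phi x

attribute [instance] PhiGaugeInterval.acgN PhiGaugeInterval.modN PhiGaugeInterval.acgZ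
  PhiGaugeInterval.modZ PhiGaugeInterval.finN PhiGaugeInterval.finZ

/-- A Dieudonné module of finite type over a perfect field `k`: a finitely generated
`W(k)`-module with a Frobenius-semilinear `F` and Verschiebung-semilinear `V` such that
`F∘V = V∘F = p·id`. -/
structure DieudonneModule (p : ℕ) [Fact p.Prime] (k : Type) [Field k] [CharP k p]
    [PerfectRing k p] where
  N : Type
  [acg : AddCommGroup N]
  [mod : Module (WittVector p k) N]
  [fin : Module.Finite (WittVector p k) N]
  F : N → N
  V : N → N
  F_add : ∀ x y, F (x + y) = F x + F y
  V_add : ∀ x y, V (x + y) = V x + V y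
  FV : ∀ x, F (V x) = (p : WittVector p k) • x
  VF : ∀ x, V (F x) = (p : WittVector p k) • x
  F_semi : ∀ (c : WittVector p k) x, F (c • x) = (WittVector.frobeniusEquiv p k c) • F x
  V_semi : ∀ (c : WittVector p k) x, V ((WittVector.frobeniusEquiv p k c) • x) = c • V x

attribute [instance] DieudonneModule.acg DieudonneModule.mod DieudonneModule.fin

section Helpers

variable {p : ℕ} [Fact p.Prime] {k : Type} [Field k] [CharP k p] [PerfectRing k p]

theorem PhiGaugeInterval.phi_symm_semi (X : PhiGaugeInterval p k)
    (c : WittVector p k) (y : X.Mneg) :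
    X.phi.symm ((WittVector.frobeniusEquiv p k c) • y) = c • X.phi.symm y := by
  apply X.phi.injective
  rw [X.phi_semi, X.phi.apply_symm_apply, X.phi.apply_symm_apply]

/-- Type synonym carrying the Frobenius-twisted module structure. -/
def DieudonneModule.Twist (Dd : DieudonneModule p k) : Type := Dd.N

instance (Dd : DieudonneModule p k) : AddCommGroup Dd.Twist := Dd.acg

noncomputable instance (Dd : DieudonneModule p k) : Module (WittVector p k) Dd.Twist :=
  Module.compHom Dd.N (WittVector.frobeniusEquiv p k).toRingHom

instance (Dd : DieudonneModule p k) : Module.Finite (WittVector p k) Dd.Twist := by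
  obtain ⟨s, hs⟩ := Dd.fin.fg_top
  constructor
  refine ⟨show Finset Dd.Twist from s, ?_⟩
  rw [eq_top_iff]
  rintro x -
  have hx : (show Dd.N from x) ∈ Submodule.span (WittVector p k) (↑s : Set Dd.N) := by
    rw [hs]; trivial
  refine Submodule.span_induction
    (p := fun (y : Dd.N) _ =>
      (show Dd.Twist from y) ∈ Submodule.span (WittVector p k) ((show Finset Dd.Twist from s : Finset Dd.Twist) : Set Dd.Twist))
    ?_ ?_ ?_ ?_ hx
  · exact fun y hy => Submodule.subset_span hy
  · exact Submodule.zero_mem _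
  · exact fun a b _ _ ha hb => Submodule.add_mem _ ha hb
  · intro c y _ hy
    have h2 := Submodule.smul_mem (Submodule.span (WittVector p k) ((show Finset Dd.Twist from s : Finset Dd.Twist) : Set Dd.Twist))
      ((WittVector.frobeniusEquiv p k).symm c) hy
    show (show Dd.Twist from c • y) ∈ _
    rw [show c • y = (WittVector.frobeniusEquiv p k)
      ((WittVector.frobeniusEquiv p k).symm c) • y by rw [RingEquiv.apply_symm_apply]]
    exact h2

noncomputable def DieudonneModule.fGauge (Dd : DieudonneModule p k) :
    Dd.N →ₗ[WittVector p k] Dd.Twist where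
  toFun := Dd.F
  map_add' := Dd.F_add
  map_smul' := fun c x => Dd.F_semi c x

noncomputable def DieudonneModule.vGauge (Dd : DieudonneModule p k) :
    Dd.Twist →ₗ[WittVector p k] Dd.N where
  toFun := Dd.V
  map_add' := Dd.V_add
  map_smul' := fun c x => Dd.V_semi c x

def DieudonneModule.phiGauge (Dd : DieudonneModule p k) : Dd.Twist ≃+ Dd.N where
  toFun := fun x => x
  invFun := fun x => x
  left_inv := fun _ => rfl
  right_inv := fun _ => rfl
  map_add' := fun _ _ => rfl

/-- The φ-gauge associated to a Dieudonné module. -/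
noncomputable def DieudonneModule.toGauge (Dd : DieudonneModule p k) :
    PhiGaugeInterval p k where
  Mneg := Dd.N
  Mzero := Dd.Twist
  f := Dd.fGauge
  v := Dd.vGauge
  fv := fun x => by
    have h : Dd.F (Dd.V (show Dd.N from x)) = (WittVector.frobeniusEquiv p k)
        ((p : ℕ) : WittVector p k) • (show Dd.N from x) := by
      rw [map_natCast]; exact Dd.FV x
    exact h
  vf := fun x => Dd.VF x
  phi := Dd.phiGauge
  phi_semi := fun c x => rfl

/-- Sending a finite-type φ-gauge `(M⁻¹, M⁰, f, v, φ)` concentrated in `[-1,0]` to the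
Dieudonné module `(M⁻¹, F, V)` with `F = φ∘f` and `V = v∘φ⁻¹` is an equivalence of
categories: it is fully faithful (a `W`-linear map `h : M⁻¹ → N⁻¹` commutes with `F` and
`V` iff it extends to a unique morphism of φ-gauges) and essentially surjective. -/
theorem phiGauge_dieudonne_equivalence (p : ℕ) [hp : Fact p.Prime] (k : Type) [Field k]
    [CharP k p] [PerfectRing k p] :
    (∀ (X Y : PhiGaugeInterval p k) (h1 : X.Mneg →ₗ[WittVector p k] Y.Mneg),
      ((∀ x : X.Mneg, h1 (X.phi (X.f x)) = Y.phi (Y.f (h1 x))) ∧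
        (∀ x : X.Mneg, h1 (X.v (X.phi.symm x)) = Y.v (Y.phi.symm (h1 x)))) ↔
      (∃! h0 : X.Mzero →ₗ[WittVector p k] Y.Mzero,
        (∀ x : X.Mneg, h0 (X.f x) = Y.f (h1 x)) ∧
        (∀ x : X.Mzero, h1 (X.v x) = Y.v (h0 x)) ∧
        (∀ x : X.Mzero, h1 (X.phi x) = Y.phi (h0 x)))) ∧
    (∀ Dd : DieudonneModule p k, ∃ (X : PhiGaugeInterval p k)
        (e : Dd.N ≃ₗ[WittVector p k] X.Mneg),
      (∀ x : Dd.N, e (Dd.F x) = X.phi (X.f (e x))) ∧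
      (∀ x : Dd.N, e (Dd.V x) = X.v (X.phi.symm (e x)))) := by
  constructor
  · intro X Y h1
    constructor
    · rintro ⟨hF, hV⟩
      refine ⟨{ toFun := fun x => Y.phi.symm (h1 (X.phi x)),
                map_add' := by intro a b; simp,
                map_smul' := by
                  intro c x
                  simp only [RingHom.id_apply]
                  rw [X.phi_semi, map_smul, Y.phi_symm_semi] }, ⟨?_, ?_, ?_⟩, ?_⟩
      · intro x
        show Y.phi.symm (h1 (X.phi (X.f x))) = Y.f (h1 x)
        rw [hF, Y.phi.symm_apply_apply]
      · intro x
        show h1 (X.v x) = Y.v (Y.phi.symm (h1 (X.phi x)))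
        have := hV (X.phi x)
        rwa [X.phi.symm_apply_apply] at this
      · intro x
        show h1 (X.phi x) = Y.phi (Y.phi.symm (h1 (X.phi x)))
        rw [Y.phi.apply_symm_apply]
      · rintro h0 ⟨-, -, h3⟩
        ext x
        show h0 x = Y.phi.symm (h1 (X.phi x))
        rw [h3 x, Y.phi.symm_apply_apply]
    · rintro ⟨h0, ⟨c1, c2, c3⟩, -⟩
      constructor
      · intro x
        rw [c3 (X.f x), c1 x]
      · intro x
        rw [c2 (X.phi.symm x)]
        congr 1
        apply Y.phi.injective
        rw [Y.phi.apply_symm_apply, ← c3, X.phi.apply_symm_apply]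
  · intro Dd
    refine ⟨Dd.toGauge, LinearEquiv.refl _ _, fun x => rfl, fun x => rfl⟩
end Helpers
end
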